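/- Let A be a positive conjunctive TABG, let r be a run of A, and let r' be a global pumping on r with indexes 1 ≤ j < i ≤ height(r) and pump-injection I. Then r' is a run of A (it satisfies all brother constraints and all global constraints of A), and height(r') < height(r). -/

import Mathlib

set_option maxHeartbeats 1000000

namespace TreeAut

/-! ### Ranked terms -/

/-- Ranked terms over a symbol type `F` (arities are imposed by well-formedness). -/
inductive RTerm (F : Type) : Type
  | node : F → List (RTerm F) → RTerm F

namespace RTerm

def rootLabel {F : Type} : RTerm F → F
  | .node f _ => f

/-- `SubAt t p s` : the subterm of `t` at position `p` is `s`. -/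
inductive SubAt {F : Type} : RTerm F → List ℕ → RTerm F → Prop
  | refl (t : RTerm F) : SubAt t [] t
  | step {f : F} {ts : List (RTerm F)} {i : ℕ} {u s : RTerm F} {p : List ℕ} :
      ts[i]? = some u → SubAt u p s → SubAt (RTerm.node f ts) (i :: p) s

/-- `p` is a position of `t`. -/
def IsPos {F : Type} (t : RTerm F) (p : List ℕ) : Prop := ∃ s, SubAt t p s

/-- `ReplAt t p s t'` : `t'` is the result of replacing in `t` the subterm at `p` by `s`. -/
inductive ReplAt {F : Type} : RTerm F → List ℕ → RTerm F → RTerm F → Prop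
  | here (t s : RTerm F) : ReplAt t [] s s
  | step {f : F} {ts : List (RTerm F)} {i : ℕ} {u u' s : RTerm F} {p : List ℕ} :
      ts[i]? = some u → ReplAt u p s u' →
      ReplAt (RTerm.node f ts) (i :: p) s (RTerm.node f (ts.set i u'))

/-- Height of a term: the maximal length of a position. -/
def height {F : Type} : RTerm F → ℕ
  | .node _ [] => 0
  | .node f (t :: ts) => max (height t + 1) (height (RTerm.node f ts))

/-- Well-formedness of a term with respect to an arity function. -/
inductive WF {F : Type} (ar : F → ℕ) : RTerm F → Prop
  | node {f : F} {ts : List (RTerm F)} :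
      ts.length = ar f → (∀ u ∈ ts, WF ar u) → WF ar (RTerm.node f ts)

/-- A constant, i.e. a term reduced to a symbol (of arity 0). -/
def IsConst {F : Type} (t : RTerm F) : Prop := ∃ c : F, t = RTerm.node c []

/-- Relabeling of a term. -/
def map {F G : Type} (g : F → G) : RTerm F → RTerm G
  | .node f ts => RTerm.node (g f) (ts.attach.map (fun u => map g u.1))
decreasing_by
  simp only [RTerm.node.sizeOf_spec]
  have := List.sizeOf_lt_of_mem u.2
  omega

end RTerm

/-! ### Patterns (terms with variables) and flat equational theories -/

/-- Terms with variables (variables are natural numbers). -/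
inductive Pat (F : Type) : Type
  | var : ℕ → Pat F
  | node : F → List (Pat F) → Pat F

namespace Pat

def subst {F : Type} (σ : ℕ → RTerm F) : Pat F → RTerm F
  | .var v => σ v
  | .node f ps => RTerm.node f (ps.attach.map (fun p => subst σ p.1))
decreasing_by
  simp only [Pat.node.sizeOf_spec]
  have := List.sizeOf_lt_of_mem p.2
  omega

def height {F : Type} : Pat F → ℕ
  | .var _ => 0
  | .node _ [] => 0
  | .node f (p :: ps) => max (height p + 1) (height (Pat.node f ps))

inductive HasVar {F : Type} (v : ℕ) : Pat F → Prop
  | var : HasVar v (Pat.var v)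
  | node {f : F} {ps : List (Pat F)} {p : Pat F} :
      p ∈ ps → HasVar v p → HasVar v (Pat.node f ps)

inductive WF {F : Type} (ar : F → ℕ) : Pat F → Prop
  | var (v : ℕ) : WF ar (Pat.var v)
  | node {f : F} {ps : List (Pat F)} :
      ps.length = ar f → (∀ p ∈ ps, WF ar p) → WF ar (Pat.node f ps)

end Pat

/-- A flat equation: both sides well-formed, of the same height which is at most 1,
and with the same variables. -/
def IsFlatEq {F : Type} (ar : F → ℕ) (e : Pat F × Pat F) : Prop :=
  e.1.WF ar ∧ e.2.WF ar ∧ e.1.height = e.2.height ∧ e.1.height ≤ 1 ∧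
  (∀ v : ℕ, Pat.HasVar v e.1 ↔ Pat.HasVar v e.2)

/-- One rewrite step using an equation of `E` (in either direction) at some position. -/
def Rew {F : Type} (E : List (Pat F × Pat F)) (s t : RTerm F) : Prop :=
  ∃ l r : Pat F, ((l, r) ∈ E ∨ (r, l) ∈ E) ∧
    ∃ (σ : ℕ → RTerm F) (p : List ℕ),
      RTerm.SubAt s p (l.subst σ) ∧ RTerm.ReplAt s p (r.subst σ) t

/-- Equivalence modulo the set of equations `E`. -/
def EqE {F : Type} (E : List (Pat F × Pat F)) : RTerm F → RTerm F → Prop :=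
  Relation.ReflTransGen (Rew E)

/-! ### Global constraints -/

/-- Transition rule of a tree automaton with constraints between brothers:
`sym(args) → res` with brother equalities `bcEq` and disequalities `bcNeq`
(1-based indices of children). -/
structure Rule (F Q : Type) where
  sym : F
  args : List Q
  bcEq : List (ℕ × ℕ)
  bcNeq : List (ℕ × ℕ)
  res : Q

/-- Atomic global constraints: `q ≈ q'`, `q ≉ q'`, and linear inequalities
`Σ c·|q| ≥ a` (type `|.|`) and `Σ c·‖q‖ ≥ a` (type `‖.‖`). -/
inductive GAtom (Q : Type) : Type
  | eq : Q → Q → GAtom Q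
  | neq : Q → Q → GAtom Q
  | cnt : List (ℤ × Q) → ℤ → GAtom Q
  | cls : List (ℤ × Q) → ℤ → GAtom Q

/-- Boolean combinations of atomic global constraints. -/
inductive GC (Q : Type) : Type
  | tt : GC Q
  | ff : GC Q
  | atom : GAtom Q → GC Q
  | and : GC Q → GC Q → GC Q
  | or : GC Q → GC Q → GC Q
  | not : GC Q → GC Q

/-- The set of `=E`-equivalence classes of members of a set of terms. -/
def classesOf {F : Type} (E : List (Pat F × Pat F)) (S : Set (RTerm F)) :
    Set (Set (RTerm F)) :=
  {C | ∃ t ∈ S, C = {u | EqE E t u}}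

section Sat

variable {β F Q : Type}

/-- Positions of a (run) tree where the node has state `q`
(`st` extracts the state of a node label). -/
def stPos (st : β → Q) (r : RTerm β) (q : Q) : Set (List ℕ) :=
  {p | ∃ s, RTerm.SubAt r p s ∧ st s.rootLabel = q}

/-- `⟦|q|⟧` : the number of positions with state `q`. -/
noncomputable def stCount (st : β → Q) (r : RTerm β) (q : Q) : ℕ :=
  (stPos st r q).ncard

/-- Terms occurring below positions with state `q`. -/
def stTerms (st : β → Q) (sy : β → F) (r : RTerm β) (q : Q) : Set (RTerm F) :=
  {t | ∃ p s, RTerm.SubAt r p s ∧ st s.rootLabel = q ∧ s.map sy = t}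

/-- `⟦‖q‖⟧` : the number of `=E`-classes of terms at positions with state `q`. -/
noncomputable def clsCount (E : List (Pat F × Pat F)) (st : β → Q) (sy : β → F)
    (r : RTerm β) (q : Q) : ℕ :=
  (classesOf E (stTerms st sy r q)).ncard

/-- Satisfaction of a global atomic constraint by a run tree. -/
def satAtom (E : List (Pat F × Pat F)) (st : β → Q) (sy : β → F) (r : RTerm β) :
    GAtom Q → Prop
  | .eq q q' => ∀ p p' s s', p ≠ p' → RTerm.SubAt r p s → RTerm.SubAt r p' s' →
      st s.rootLabel = q → st s'.rootLabel = q' → EqE E (s.map sy) (s'.map sy)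
  | .neq q q' => ∀ p p' s s', p ≠ p' → RTerm.SubAt r p s → RTerm.SubAt r p' s' →
      st s.rootLabel = q → st s'.rootLabel = q' → ¬ EqE E (s.map sy) (s'.map sy)
  | .cnt l a => a ≤ (l.map (fun cq => cq.1 * (stCount st r cq.2 : ℤ))).sum
  | .cls l a => a ≤ (l.map (fun cq => cq.1 * (clsCount E st sy r cq.2 : ℤ))).sum

/-- Satisfaction of a global constraint by a run tree. -/
def satGC (E : List (Pat F × Pat F)) (st : β → Q) (sy : β → F) (r : RTerm β) :
    GC Q → Prop
  | .tt => True
  | .ff => False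
  | .atom a => satAtom E st sy r a
  | .and c d => satGC E st sy r c ∧ satGC E st sy r d
  | .or c d => satGC E st sy r c ∨ satGC E st sy r d
  | .not c => ¬ satGC E st sy r c

end Sat

/-! ### Tree automata with global and brother constraints modulo a flat theory -/

/-- A run is represented as a tree labeled by the rules applied at each position. -/
abbrev Run (F Q : Type) := RTerm (Rule F Q)

def Run.state {F Q : Type} (r : Run F Q) : Q := (RTerm.rootLabel r).res
def Run.term {F Q : Type} (r : Run F Q) : RTerm F := r.map Rule.sym

/-- `r` is a structurally correct run using rules of `Δ`, whose local brother
constraints are satisfied modulo `E`. -/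
inductive IsRun {F Q : Type} (Δ : List (Rule F Q)) (E : List (Pat F × Pat F)) :
    Run F Q → Prop
  | node {ρ : Rule F Q} {rs : List (Run F Q)} :
      ρ ∈ Δ →
      ρ.args = rs.map Run.state →
      (∀ r ∈ rs, IsRun Δ E r) →
      (∀ i j ri rj, (i, j) ∈ ρ.bcEq → rs[i - 1]? = some ri →
        rs[j - 1]? = some rj → EqE E ri.term rj.term) →
      (∀ i j ri rj, (i, j) ∈ ρ.bcNeq → rs[i - 1]? = some ri →
        rs[j - 1]? = some rj → ¬ EqE E ri.term rj.term) →
      IsRun Δ E (RTerm.node ρ rs)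

/-- Tree automaton with brother constraints and global constraints modulo a flat theory. -/
structure TABG (F Q : Type) where
  arity : F → ℕ
  stQ : Finset Q
  rules : List (Rule F Q)
  final : List Q
  eqs : List (Pat F × Pat F)
  gc : GC Q

def TABG.IsAccRun {F Q : Type} (A : TABG F Q) (r : Run F Q) : Prop :=
  IsRun A.rules A.eqs r ∧ satGC A.eqs Rule.res Rule.sym r A.gc ∧ r.state ∈ A.final

def TABG.Lang {F Q : Type} (A : TABG F Q) : Set (RTerm F) :=
  {t | ∃ r : Run F Q, A.IsAccRun r ∧ r.term = t}

def Rule.WFr {F Q : Type} (ar : F → ℕ) (S : Finset Q) (ρ : Rule F Q) : Prop :=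
  ρ.args.length = ar ρ.sym ∧ ρ.res ∈ S ∧ (∀ q ∈ ρ.args, q ∈ S) ∧
  (∀ ij ∈ ρ.bcEq, 1 ≤ ij.1 ∧ ij.1 ≤ ρ.args.length ∧ 1 ≤ ij.2 ∧ ij.2 ≤ ρ.args.length) ∧
  (∀ ij ∈ ρ.bcNeq, 1 ≤ ij.1 ∧ ij.1 ≤ ρ.args.length ∧ 1 ≤ ij.2 ∧ ij.2 ≤ ρ.args.length)

/-- Well-formedness of a TABG: the equational theory is flat, the rules respect
the arities and the state set, and final states belong to the state set. -/
def TABG.WF {F Q : Type} (A : TABG F Q) : Prop :=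
  (∀ e ∈ A.eqs, IsFlatEq A.arity e) ∧
  (∀ ρ ∈ A.rules, ρ.WFr A.arity A.stQ) ∧
  (∀ q ∈ A.final, q ∈ A.stQ)

/-! ### Classes of constraints -/

def GAtom.IsEqNeq {Q : Type} : GAtom Q → Prop
  | .eq _ _ => True
  | .neq _ _ => True
  | .cnt _ _ => False
  | .cls _ _ => False

/-- All coefficients and the constant have the same sign. -/
def sameSign (l : List ℤ) (a : ℤ) : Prop :=
  ((∀ c ∈ l, 0 ≤ c) ∧ 0 ≤ a) ∨ ((∀ c ∈ l, c ≤ 0) ∧ a ≤ 0)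

/-- eq/neq atoms and *natural* linear inequalities. -/
def GAtom.IsNat {Q : Type} : GAtom Q → Prop
  | .eq _ _ => True
  | .neq _ _ => True
  | .cnt l a => sameSign (l.map Prod.fst) a
  | .cls l a => sameSign (l.map Prod.fst) a

/-- eq/neq atoms and natural linear inequalities over the `|q|` only. -/
def GAtom.IsNatCnt {Q : Type} : GAtom Q → Prop
  | .eq _ _ => True
  | .neq _ _ => True
  | .cnt l a => sameSign (l.map Prod.fst) a
  | .cls _ _ => False

def GC.AtomsAre {Q : Type} (P : GAtom Q → Prop) : GC Q → Prop
  | .tt => True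
  | .ff => True
  | .atom a => P a
  | .and c d => GC.AtomsAre P c ∧ GC.AtomsAre P d
  | .or c d => GC.AtomsAre P c ∧ GC.AtomsAre P d
  | .not c => GC.AtomsAre P c

/-- Positive conjunctive constraint: a conjunction of atoms. -/
def GC.IsConjAtoms {Q : Type} : GC Q → Prop
  | .tt => True
  | .ff => False
  | .atom _ => True
  | .and c d => GC.IsConjAtoms c ∧ GC.IsConjAtoms d
  | .or _ _ => False
  | .not _ => False

/-- A literal: an atom (with natural arithmetic atoms) or the negation of an
eq/neq atom. -/
def GC.IsLit {Q : Type} : GC Q → Prop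
  | .atom a => GAtom.IsNat a
  | .not (.atom (.eq _ _)) => True
  | .not (.atom (.neq _ _)) => True
  | _ => False

def GC.IsConjLit {Q : Type} : GC Q → Prop
  | .and c d => GC.IsConjLit c ∧ GC.IsConjLit d
  | c => GC.IsLit c

def GC.IsDNF {Q : Type} : GC Q → Prop
  | .or c d => GC.IsDNF c ∧ GC.IsDNF d
  | c => GC.IsConjLit c

/-- Normalized constraint: `true`, `false`, or a disjunction of conjunctions of
literals in which all arithmetic literals are positive. -/
def GC.Normalized {Q : Type} (c : GC Q) : Prop :=
  c = GC.tt ∨ c = GC.ff ∨ GC.IsDNF c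

/-- No reflexive disequality constraints (the TAGED restriction). -/
def GC.NoReflNeq {Q : Type} : GC Q → Prop :=
  GC.AtomsAre (fun a => match a with
    | .neq q q' => q ≠ q'
    | _ => True)

def conjList {Q : Type} : List (GC Q) → GC Q
  | [] => GC.tt
  | [c] => c
  | c :: cs => GC.and c (conjList cs)

def disjList {Q : Type} : List (GC Q) → GC Q
  | [] => GC.ff
  | [c] => c
  | c :: cs => GC.or c (disjList cs)

/-- No local constraints between brothers. -/
def TABG.NoBrother {F Q : Type} (A : TABG F Q) : Prop :=
  ∀ ρ ∈ A.rules, ρ.bcEq = [] ∧ ρ.bcNeq = []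

/-- A TAG: empty equational theory and no brother constraints. -/
def TABG.IsTAG {F Q : Type} (A : TABG F Q) : Prop := A.eqs = [] ∧ A.NoBrother

/-- A plain tree automaton: a TAG with trivial global constraint. -/
def TABG.IsTA {F Q : Type} (A : TABG F Q) : Prop := A.IsTAG ∧ A.gc = GC.tt

/-! ### Synonym states -/

section Syn

variable {F Q : Type} [DecidableEq Q]

/-- Possible replacements of a state occurrence: `q̄` may stay or become `q̂`. -/
def replS (qb qh q : Q) : List Q := if q = qb then [qb, qh] else [q]

/-- Replacement of every occurrence of `|q̄|` (resp. `‖q̄‖`) by `|q̄| + |q̂|`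
(resp. `‖q̄‖ + ‖q̂‖`) in a linear expression. -/
def linRepl (qb qh : Q) (l : List (ℤ × Q)) : List (ℤ × Q) :=
  l.flatMap (fun cq => (replS qb qh cq.2).map (fun q' => (cq.1, q')))

/-- Literal transformation on positive atoms. -/
def synAtom (qb qh : Q) : GAtom Q → GC Q
  | .eq q1 q2 => conjList ((replS qb qh q1).flatMap (fun a =>
      (replS qb qh q2).map (fun b => GC.atom (GAtom.eq a b))))
  | .neq q1 q2 => conjList ((replS qb qh q1).flatMap (fun a =>
      (replS qb qh q2).map (fun b => GC.atom (GAtom.neq a b))))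
  | .cnt l a => GC.atom (GAtom.cnt (linRepl qb qh l) a)
  | .cls l a => GC.atom (GAtom.cls (linRepl qb qh l) a)

/-- The literal transformation `Ĉ` of (a normalized) constraint, for `q̄ ↝ q̂`. -/
def GC.synTrans (qb qh : Q) : GC Q → GC Q
  | .tt => .tt
  | .ff => .ff
  | .atom a => synAtom qb qh a
  | .not (.atom (.eq q1 q2)) => disjList ((replS qb qh q1).flatMap (fun a =>
      (replS qb qh q2).map (fun b => GC.not (GC.atom (GAtom.eq a b)))))
  | .not (.atom (.neq q1 q2)) => disjList ((replS qb qh q1).flatMap (fun a =>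
      (replS qb qh q2).map (fun b => GC.not (GC.atom (GAtom.neq a b)))))
  | .not c => GC.not (GC.synTrans qb qh c)
  | .and c d => GC.and (GC.synTrans qb qh c) (GC.synTrans qb qh d)
  | .or c d => GC.or (GC.synTrans qb qh c) (GC.synTrans qb qh d)

/-- All rules obtained from `ρ` by all possible replacements of occurrences of
`q̄` by `q̂`. -/
def Rule.synVars (qb qh : Q) (ρ : Rule F Q) : List (Rule F Q) :=
  (ρ.args.mapM (replS qb qh)).flatMap (fun args' =>
    (replS qb qh ρ.res).map (fun res' =>
      { sym := ρ.sym, args := args', bcEq := ρ.bcEq, bcNeq := ρ.bcNeq, res := res' }))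

/-- `F_{q̄↝q̂}` on the list of final states. -/
def finSyn (qb qh : Q) (l : List Q) : List Q := if qb ∈ l then qh :: l else l

/-- The constraint `‖q‖ = k`. -/
def clsEqC (q : Q) (k : ℤ) : GC Q :=
  GC.and (GC.atom (GAtom.cls [(1, q)] k)) (GC.atom (GAtom.cls [(-1, q)] (-k)))

/-- The automaton `A_{q̄↝q̂}`. -/
def TABG.synonym (A : TABG F Q) (qb qh : Q) : TABG F Q :=
  { arity := A.arity
    stQ := insert qh A.stQ
    rules := A.rules.flatMap (Rule.synVars qb qh)
    final := finSyn qb qh A.final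
    eqs := A.eqs
    gc := GC.and
      (GC.or (GC.and (clsEqC qb 0) (clsEqC qh 0))
             (GC.and (clsEqC qh 1) (GC.atom (GAtom.neq qb qh))))
      (GC.synTrans qb qh A.gc) }

end Syn

/-! ### Removal of the counting constraints `|q|` : the automaton `A_¬ℕ` -/

def GC.cntAtoms {Q : Type} : GC Q → List (List (ℤ × Q) × ℤ)
  | .atom (.cnt l a) => [(l, a)]
  | .and c d => GC.cntAtoms c ++ GC.cntAtoms d
  | .or c d => GC.cntAtoms c ++ GC.cntAtoms d
  | .not c => GC.cntAtoms c
  | _ => []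

def GC.eqAtoms {Q : Type} : GC Q → List (Q × Q)
  | .atom (.eq q q') => [(q, q')]
  | .and c d => GC.eqAtoms c ++ GC.eqAtoms d
  | .or c d => GC.eqAtoms c ++ GC.eqAtoms d
  | .not c => GC.eqAtoms c
  | _ => []

def GC.neqAtoms {Q : Type} : GC Q → List (Q × Q)
  | .atom (.neq q q') => [(q, q')]
  | .and c d => GC.neqAtoms c ++ GC.neqAtoms d
  | .or c d => GC.neqAtoms c ++ GC.neqAtoms d
  | .not c => GC.neqAtoms c
  | _ => []

/-- `max_A` : one plus the maximal constant occurring in the counting literals. -/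
def GC.maxConst {Q : Type} (c : GC Q) : ℕ :=
  1 + ((c.cntAtoms.map (fun la => la.2.natAbs)).foldr max 0)

/-- Truncated sum of two mappings `Q → {0,…,m}`. -/
def msumF {Q : Type} {m : ℕ} (M1 M2 : Q → Fin (m + 1)) : Q → Fin (m + 1) :=
  fun q => ⟨min ((M1 q : ℕ) + (M2 q : ℕ)) m, Nat.lt_succ_of_le (Nat.min_le_right _ _)⟩

/-- The mapping `M_q`. -/
def unitMap {Q : Type} [DecidableEq Q] (m : ℕ) (q : Q) : Q → Fin (m + 1) :=
  fun q' => if q' = q then ⟨min 1 m, Nat.lt_succ_of_le (Nat.min_le_right _ _)⟩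
            else ⟨0, Nat.succ_pos m⟩

/-- Value of a linear expression under a mapping. -/
def lvalF {Q : Type} {m : ℕ} (M : Q → Fin (m + 1)) (l : List (ℤ × Q)) : ℤ :=
  (l.map (fun cq => cq.1 * ((M cq.2 : ℕ) : ℤ))).sum

/-- All variants of a rule, decorated with occurrence-counting mappings. -/
noncomputable def Rule.notNVars {F Q : Type} [Fintype Q] [DecidableEq Q] (m : ℕ) (ρ : Rule F Q) :
    List (Rule F (Q × (Q → Fin (m + 1)))) :=
  ((ρ.args.mapM (fun q =>
      ((Finset.univ : Finset (Q → Fin (m + 1))).toList).map (fun M => (q, M))))).map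
    (fun args' =>
      { sym := ρ.sym, args := args', bcEq := ρ.bcEq, bcNeq := ρ.bcNeq,
        res := (ρ.res, (args'.map Prod.snd).foldr msumF (unitMap m ρ.res)) })

/-- The automaton `A_¬ℕ`. -/
noncomputable def TABG.notN {F Q : Type} [Fintype Q] [DecidableEq Q] (A : TABG F Q) :
    TABG F (Q × (Q → Fin (A.gc.maxConst + 1))) :=
  { arity := A.arity
    stQ := A.stQ ×ˢ (Finset.univ : Finset (Q → Fin (A.gc.maxConst + 1)))
    rules := A.rules.flatMap (Rule.notNVars A.gc.maxConst)
    final := (A.final.flatMap (fun q =>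
        ((Finset.univ : Finset (Q → Fin (A.gc.maxConst + 1))).toList).map
          (fun M => (q, M)))).filter
        (fun qM => decide (∀ la ∈ A.gc.cntAtoms, la.2 ≤ lvalF qM.2 la.1))
    eqs := A.eqs
    gc := GC.and
      (conjList ((A.gc.eqAtoms).flatMap (fun qq =>
        ((Finset.univ : Finset (Q → Fin (A.gc.maxConst + 1))).toList).flatMap (fun M1 =>
          ((Finset.univ : Finset (Q → Fin (A.gc.maxConst + 1))).toList).map (fun M2 =>
            GC.atom (GAtom.eq (qq.1, M1) (qq.2, M2)))))))
      (conjList ((A.gc.neqAtoms).flatMap (fun qq =>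
        ((Finset.univ : Finset (Q → Fin (A.gc.maxConst + 1))).toList).flatMap (fun M1 =>
          ((Finset.univ : Finset (Q → Fin (A.gc.maxConst + 1))).toList).map (fun M2 =>
            GC.atom (GAtom.neq (qq.1, M1) (qq.2, M2))))))) }

/-! ### Global pumpings -/

section Pump

variable {F Q : Type}

/-- `H_i` : positions of subruns of positive height equal to `i`. -/
def Hset (r : Run F Q) (i : ℕ) : Set (List ℕ) :=
  {p | ∃ s, RTerm.SubAt r p s ∧ 0 < RTerm.height s ∧ RTerm.height s = i}

/-- `Ȟ_i` : positions `p.j` of subruns of positive height `< i` whose parent has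
height `> i`. -/
def Hcheck (r : Run F Q) (i : ℕ) : Set (List ℕ) :=
  {p' | ∃ (p : List ℕ) (j : ℕ) (s s' : Run F Q), p' = p ++ [j] ∧
    RTerm.SubAt r p s ∧ RTerm.SubAt r p' s' ∧
    0 < RTerm.height s' ∧ RTerm.height s' < i ∧ i < RTerm.height s}

/-- `H̊_i` : positions `p.j` of subruns of height `0` (with `0 < i`) whose parent
has height `> i`. -/
def Hring (r : Run F Q) (i : ℕ) : Set (List ℕ) :=
  {p' | ∃ (p : List ℕ) (j : ℕ) (s s' : Run F Q), p' = p ++ [j] ∧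
    RTerm.SubAt r p s ∧ RTerm.SubAt r p' s' ∧
    RTerm.height s' = 0 ∧ 0 < i ∧ i < RTerm.height s}

def Dom (r : Run F Q) (i : ℕ) : Set (List ℕ) := Hset r i ∪ Hcheck r i ∪ Hring r i

/-- A pump-injection `I : (H_i ∪ Ȟ_i ∪ H̊_i) → (H_j ∪ Ȟ_j ∪ H̊_j)`. -/
structure PumpInj (E : List (Pat F × Pat F)) (r : Run F Q) (i j : ℕ)
    (I : List ℕ → List ℕ) : Prop where
  inj : Set.InjOn I (Dom r i)
  mapsH : Set.MapsTo I (Hset r i) (Hset r j)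
  mapsHc : Set.MapsTo I (Hcheck r i) (Hcheck r j)
  mapsHr : Set.MapsTo I (Hring r i) (Hring r j)
  idRing : ∀ p ∈ Hring r i, I p = p
  stPres : ∀ p ∈ Dom r i, ∀ s s', RTerm.SubAt r p s → RTerm.SubAt r (I p) s' →
    Run.state s = Run.state s'
  eqPres : ∀ p1 p2, p1 ∈ Dom r i → p2 ∈ Dom r i →
    ∀ s1 s2 s1' s2', RTerm.SubAt r p1 s1 → RTerm.SubAt r p2 s2 →
      RTerm.SubAt r (I p1) s1' → RTerm.SubAt r (I p2) s2' →
      (EqE E (Run.term s1) (Run.term s2) ↔ EqE E (Run.term s1') (Run.term s2'))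

/-- Simultaneous replacement at all positions of `D` (which are assumed to be
pairwise parallel): at a position of `D` the subtree is replaced by a tree
allowed by `ρ`, elsewhere the tree is kept. -/
inductive MultiRepl {β : Type} (D : Set (List ℕ)) (ρ : List ℕ → RTerm β → Prop) :
    List ℕ → RTerm β → RTerm β → Prop
  | here {p : List ℕ} {t t' : RTerm β} : p ∈ D → ρ p t' → MultiRepl D ρ p t t'
  | node {p : List ℕ} {f : β} {ts ts' : List (RTerm β)} :
      p ∉ D → ts.length = ts'.length →
      (∀ k u u', ts[k]? = some u → ts'[k]? = some u' →
        MultiRepl D ρ (p ++ [k]) u u') →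
      MultiRepl D ρ p (RTerm.node f ts) (RTerm.node f ts')

/-- `r'` is the global pumping on `r` with indexes `i,j` and injection `I`. -/
def IsGlobalPumpingWith (E : List (Pat F × Pat F)) (r : Run F Q) (i j : ℕ)
    (I : List ℕ → List ℕ) (r' : Run F Q) : Prop :=
  PumpInj E r i j I ∧
  MultiRepl (Dom r i) (fun p s => RTerm.SubAt r (I p) s) [] r r'

/-- The `=E`-classes of the subterms at positions of `P`. -/
def classesAt (E : List (Pat F × Pat F)) (r : Run F Q) (P : Set (List ℕ)) :
    Set (Set (RTerm F)) :=
  classesOf E {t | ∃ p ∈ P, ∃ s, RTerm.SubAt r p s ∧ Run.term s = t}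

/-- The tuple `r_{t,P}` of a class `C`, as a function on states. -/
noncomputable def tupleAt (r : Run F Q) (P : Set (List ℕ)) (C : Set (RTerm F))
    (q : Q) : ℕ :=
  {p | p ∈ P ∧ ∃ s, RTerm.SubAt r p s ∧ Run.state s = q ∧ Run.term s ∈ C}.ncard

/-- The multiset ordering `r_P ≤ r_{P'}` : an injection on classes which is
dominating on the associated tuples. -/
def MsetLE (E : List (Pat F × Pat F)) (r : Run F Q) (P P' : Set (List ℕ)) : Prop :=
  ∃ φ : Set (RTerm F) → Set (RTerm F),
    Set.InjOn φ (classesAt E r P) ∧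
    Set.MapsTo φ (classesAt E r P) (classesAt E r P') ∧
    ∀ C ∈ classesAt E r P, ∀ q, tupleAt r P C q ≤ tupleAt r P' (φ C) q

end Pump

/-! ### Multisets of tuples of naturals (for the well quasi-ordering) -/

def TupLE {n : ℕ} (x y : Fin n → ℕ) : Prop := ∀ k, x k ≤ y k

/-- Multiset ordering: an injection mapping each element to a dominating one. -/
def MLE {n : ℕ} (S T : Multiset (Fin n → ℕ)) : Prop :=
  ∃ T' : Multiset (Fin n → ℕ), T' ≤ T ∧ Multiset.Rel TupLE S T'

def msumT {n : ℕ} (S : Multiset (Fin n → ℕ)) : ℕ :=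
  (S.map (fun x => ∑ k, x k)).sum

/-! ### Hedge automata with global constraints, and currying -/

/-- A finite word automaton over the alphabet `Q` (auxiliary states are naturals). -/
structure WordAut (Q : Type) where
  stS : Finset ℕ
  init : ℕ
  final : List ℕ
  trans : List (ℕ × Q × ℕ)

inductive WAccepts {Q : Type} (W : WordAut Q) : ℕ → List Q → Prop
  | nil {s : ℕ} : s ∈ W.final → WAccepts W s []
  | cons {s : ℕ} {q : Q} {s' : ℕ} {w : List Q} :
      (s, q, s') ∈ W.trans → WAccepts W s' w → WAccepts W s (q :: w)

def WordAut.Lang {Q : Type} (W : WordAut Q) (w : List Q) : Prop := WAccepts W W.init w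

/-- Transition rule `a(L) → q` of a hedge automaton. -/
structure HRule (F Q : Type) where
  sym : F
  wa : WordAut Q
  res : Q

/-- Hedge automaton with global constraints, over unranked ordered terms. -/
structure HAG (F Q : Type) where
  stQ : Finset Q
  rules : List (HRule F Q)
  final : List Q
  gc : GC Q

abbrev HRun (F Q : Type) := RTerm (HRule F Q)

def HRun.state {F Q : Type} (r : HRun F Q) : Q := (RTerm.rootLabel r).res
def HRun.term {F Q : Type} (r : HRun F Q) : RTerm F := r.map HRule.sym

inductive IsHRun {F Q : Type} (Δ : List (HRule F Q)) : HRun F Q → Prop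
  | node {ρ : HRule F Q} {rs : List (HRun F Q)} :
      ρ ∈ Δ → ρ.wa.Lang (rs.map HRun.state) →
      (∀ r ∈ rs, IsHRun Δ r) → IsHRun Δ (RTerm.node ρ rs)

def HAG.Lang {F Q : Type} (A : HAG F Q) : Set (RTerm F) :=
  {t | ∃ r : HRun F Q, IsHRun A.rules r ∧
        satGC ([] : List (Pat F × Pat F)) HRule.res HRule.sym r A.gc ∧
        HRun.state r ∈ A.final ∧ HRun.term r = t}

/-- The ranked signature `Σ_@` : symbols of `Σ` become constants, `none` is the
binary symbol `@`. -/
def arAt {F : Type} : Option F → ℕ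
  | none => 2
  | some _ => 0

/-- The `curry` encoding of unranked terms into ranked terms over `Σ_@`. -/
inductive Curried {F : Type} : RTerm F → RTerm (Option F) → Prop
  | base {a : F} : Curried (RTerm.node a []) (RTerm.node (some a) [])
  | step {a : F} {ts : List (RTerm F)} {t : RTerm F} {u v : RTerm (Option F)} :
      Curried (RTerm.node a ts) u → Curried t v →
      Curried (RTerm.node a (ts ++ [t])) (RTerm.node none [u, v])

/-! ### Concrete signatures and languages -/

/-- The signature `{a:0, s:1, f:2}` (resp. `{a:0, g:1, f:2}`): symbol `0` has
arity 0, symbol `1` arity 1, symbol `2` arity 2. -/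
def ar3 : Fin 3 → ℕ := ![0, 1, 2]

/-- `iter1 n` is `s^n(a)` (resp. `g^n(a)`). -/
def iter1 : ℕ → RTerm (Fin 3)
  | 0 => RTerm.node 0 []
  | n + 1 => RTerm.node 1 [iter1 n]

/-- `chain [n1,…,nk] = f(s^{n1}(a), f(s^{n2}(a), …, f(s^{nk}(a), a)…))`. -/
def chain : List ℕ → RTerm (Fin 3)
  | [] => RTerm.node 0 []
  | n :: ns => RTerm.node 2 [iter1 n, chain ns]

/-- The language of chains with pairwise distinct exponents. -/
def LKey : Set (RTerm (Fin 3)) := {t | ∃ ns : List ℕ, ns.Nodup ∧ t = chain ns}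

/-- `bracket [n1,…,nk] = f(g^{n1}(a), f(…, f(g^{n_{k−1}}(a), g^{n_k}(a))…))`. -/
def bracket : List ℕ → RTerm (Fin 3)
  | [] => RTerm.node 0 []
  | [n] => iter1 n
  | n :: ns => RTerm.node 2 [iter1 n, bracket ns]

/-- Every entry has exactly one partner with the same value. -/
def ExactlyOnePartner (ns : List ℕ) : Prop :=
  ∀ i, i < ns.length → ∃! j, j < ns.length ∧ j ≠ i ∧ ns[i]? = ns[j]?

def LDup : Set (RTerm (Fin 3)) :=
  {t | ∃ ns : List ℕ, ns ≠ [] ∧ ExactlyOnePartner ns ∧ t = bracket ns}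

/-! ### Concrete, codable presentations of automata -/

abbrev RuleData := ℕ × List ℕ × List (ℕ × ℕ) × List (ℕ × ℕ) × ℕ
abbrev PatAtomData := ℕ ⊕ ℕ
abbrev FlatSideData := PatAtomData ⊕ (ℕ × List PatAtomData)
abbrev LinData := List (ℤ × ℕ) × ℤ
abbrev GAtomData := (ℕ × ℕ) ⊕ ((ℕ × ℕ) ⊕ (LinData ⊕ LinData))
abbrev GCNodeData := GAtomData ⊕ (ℕ × ℕ × ℕ)
abbrev TABGData :=
  List (ℕ × ℕ) × List RuleData × List ℕ × List (FlatSideData × FlatSideData) ×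
    List GCNodeData

def decodePatAtom : PatAtomData → Pat ℕ
  | Sum.inl v => Pat.var v
  | Sum.inr c => Pat.node c []

def decodeSide : FlatSideData → Pat ℕ
  | Sum.inl a => decodePatAtom a
  | Sum.inr (f, l) => Pat.node f (l.map decodePatAtom)

def decodeGAtom : GAtomData → GAtom ℕ
  | Sum.inl (q, q') => GAtom.eq q q'
  | Sum.inr (Sum.inl (q, q')) => GAtom.neq q q'
  | Sum.inr (Sum.inr (Sum.inl (l, a))) => GAtom.cnt l a
  | Sum.inr (Sum.inr (Sum.inr (l, a))) => GAtom.cls l a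

def decodeGC (nodes : List GCNodeData) : ℕ → ℕ → GC ℕ
  | 0, _ => GC.tt
  | fuel + 1, i =>
    match nodes[i]? with
    | some (Sum.inl a) => GC.atom (decodeGAtom a)
    | some (Sum.inr (op, l, rr)) =>
      if op = 0 then GC.tt
      else if op = 1 then GC.ff
      else if op = 2 then GC.and (decodeGC nodes fuel l) (decodeGC nodes fuel rr)
      else if op = 3 then GC.or (decodeGC nodes fuel l) (decodeGC nodes fuel rr)
      else GC.not (decodeGC nodes fuel l)
    | none => GC.tt

def decodeRule : RuleData → Rule ℕ ℕ
  | (f, args, be, bn, q) => ⟨f, args, be, bn, q⟩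

def decodeArity (sig : List (ℕ × ℕ)) : ℕ → ℕ :=
  fun f => (((sig.find? (fun p => p.1 == f)).map Prod.snd).getD 0)

def dataStates (rules : List RuleData) (final : List ℕ) : Finset ℕ :=
  (rules.flatMap (fun r => r.2.2.2.2 :: r.2.1)).toFinset ∪ final.toFinset

/-- Decoding of a full TABG with arbitrary Boolean global constraint. -/
def decodeTABG (d : TABGData) : TABG ℕ ℕ :=
  { arity := decodeArity d.1
    stQ := dataStates d.2.1 d.2.2.1
    rules := d.2.1.map decodeRule
    final := d.2.2.1
    eqs := d.2.2.2.1.map (fun e => (decodeSide e.1, decodeSide e.2))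
    gc := decodeGC d.2.2.2.2 (d.2.2.2.2).length 0 }

/-- Data for a `TAG^∧[≈]` : signature, rules (no brother constraints), final
states, and a conjunction of equational atoms `q ≈ q'`. -/
abbrev TAGCEData := List (ℕ × ℕ) × List (ℕ × List ℕ × ℕ) × List ℕ × List (ℕ × ℕ)

def decodeTAGCE (d : TAGCEData) : TABG ℕ ℕ :=
  { arity := decodeArity d.1
    stQ := (d.2.1.flatMap (fun r => r.2.2 :: r.2.1)).toFinset ∪ d.2.2.1.toFinset
    rules := d.2.1.map (fun r => ⟨r.1, r.2.1, [], [], r.2.2⟩)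
    final := d.2.2.1
    eqs := []
    gc := conjList (d.2.2.2.map (fun qq => GC.atom (GAtom.eq qq.1 qq.2))) }

/-- Data for a `TAG^∧[≈, |.|_ℤ]` : as above plus a conjunction of integer linear
inequalities. -/
abbrev TAGCZData :=
  List (ℕ × ℕ) × List (ℕ × List ℕ × ℕ) × List ℕ × List (ℕ × ℕ) × List LinData

def decodeTAGCZ (d : TAGCZData) : TABG ℕ ℕ :=
  { arity := decodeArity d.1
    stQ := (d.2.1.flatMap (fun r => r.2.2 :: r.2.1)).toFinset ∪ d.2.2.1.toFinset
    rules := d.2.1.map (fun r => ⟨r.1, r.2.1, [], [], r.2.2⟩)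
    final := d.2.2.1
    eqs := []
    gc := conjList
      (d.2.2.2.1.map (fun qq => GC.atom (GAtom.eq qq.1 qq.2)) ++
       d.2.2.2.2.map (fun la => GC.atom (GAtom.cnt la.1 la.2))) }

/-- A tree language over the ranked signature `ar` is regular if it is the
language of a plain tree automaton. -/
def IsRegular (ar : ℕ → ℕ) (L : Set (RTerm ℕ)) : Prop :=
  ∃ (n : ℕ) (B : TABG ℕ (Fin n)), B.arity = ar ∧ B.WF ∧ B.IsTA ∧ B.Lang = L

/-! ### Automata classes as predicates -/

/-- A TAGED: a TAG whose constraint is a conjunction of atoms `q ≈ q'`, `q ≉ q'`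
without reflexive disequalities. -/
def TAGEDCond {F Q : Type} (A : TABG F Q) : Prop :=
  A.IsTAG ∧ A.gc.IsConjAtoms ∧ A.gc.AtomsAre GAtom.IsEqNeq ∧ A.gc.NoReflNeq

/-- A positive conjunctive TAG with eq/neq atoms (`TAG^∧[≈,≉]`). -/
def TAGCwCond {F Q : Type} (A : TABG F Q) : Prop :=
  A.IsTAG ∧ A.gc.IsConjAtoms ∧ A.gc.AtomsAre GAtom.IsEqNeq

end TreeAut

namespace TreeAut
section Aux
set_option linter.unusedVariables false
set_option linter.unnecessarySimpa false

variable {F G Q : Type}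

section ListAux

theorem lget?_set_self {α : Type _} {l : List α} {i : ℕ} {a : α} (b : α)
    (h : l[i]? = some a) : (l.set i b)[i]? = some b := by
  induction l generalizing i with
  | nil => simp at h
  | cons x xs ih =>
    cases i with
    | zero => simp
    | succ n => simpa using ih (by simpa using h)

theorem lget?_set_ne {α : Type _} {l : List α} {i k : ℕ} {b : α}
    (h : i ≠ k) : (l.set i b)[k]? = l[k]? := by
  induction l generalizing i k with
  | nil => simp
  | cons x xs ih =>
    cases i with
    | zero => cases k with
      | zero => exact absurd rfl h
      | succ m => simp
    | succ n => cases k with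
      | zero => simp
      | succ m => simpa using ih (by omega)

theorem lset_self {α : Type _} {l : List α} {i : ℕ} {a : α}
    (h : l[i]? = some a) : l.set i a = l := by
  induction l generalizing i with
  | nil => simp at h
  | cons x xs ih =>
    cases i with
    | zero => simp at h; simp [h]
    | succ n => simpa using ih (by simpa using h)

theorem lset_set {α : Type _} {l : List α} {i : ℕ} {a b : α} :
    (l.set i a).set i b = l.set i b := by
  induction l generalizing i with
  | nil => simp
  | cons x xs ih =>
    cases i with
    | zero => simp
    | succ n => simpa using ih

theorem foldr_max_le {l : List ℕ} {x : ℕ} (h : x ∈ l) : x ≤ l.foldr max 0 := by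
  induction l with
  | nil => simp at h
  | cons a m ih =>
    rcases List.mem_cons.1 h with rfl | h
    · simp only [List.foldr_cons]; omega
    · have := ih h; simp only [List.foldr_cons]; omega

theorem foldr_max_mem {l : List ℕ} (h : l ≠ []) :
    l.foldr max 0 = 0 ∨ l.foldr max 0 ∈ l := by
  induction l with
  | nil => exact absurd rfl h
  | cons a m ih =>
    rw [List.foldr_cons]
    rcases Nat.le_total a (m.foldr max 0) with hle | hle
    · rw [Nat.max_eq_right hle]
      by_cases hm : m = []
      · subst hm
        left; rfl
      · rcases ih hm with h0 | hmem
        · left; exact h0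
        · right; exact List.mem_cons_of_mem _ hmem
    · rw [Nat.max_eq_left hle]
      right; exact List.mem_cons_self

end ListAux

namespace RTerm

theorem indOn {motive : RTerm F → Prop}
    (h : ∀ f ts, (∀ u ∈ ts, motive u) → motive (RTerm.node f ts)) : ∀ t, motive t
  | .node f ts => h f ts (fun u hu => indOn h u)
decreasing_by
  simp only [RTerm.node.sizeOf_spec]
  have := List.sizeOf_lt_of_mem hu
  omega

theorem SubAt.det {t s s' : RTerm F} {p : List ℕ}
    (h : SubAt t p s) (h' : SubAt t p s') : s = s' := by
  induction h generalizing s' with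
  | refl => cases h'; rfl
  | step hg hs ih =>
    cases h' with
    | step hg' hs' =>
      refine ih ?_
      rwa [← Option.some.inj (hg.symm.trans hg')] at hs'

theorem SubAt.comp {t u s : RTerm F} {p q : List ℕ}
    (h : SubAt t p u) (h' : SubAt u q s) : SubAt t (p ++ q) s := by
  induction h with
  | refl => exact h'
  | step hg hs ih => exact SubAt.step hg (ih h')

theorem SubAt.append_inv {t s : RTerm F} {p q : List ℕ}
    (h : SubAt t (p ++ q) s) : ∃ u, SubAt t p u ∧ SubAt u q s := by
  induction p generalizing t with
  | nil => exact ⟨t, SubAt.refl t, h⟩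
  | cons k p ih =>
    cases h with
    | step hg hs =>
      obtain ⟨u, hu, hus⟩ := ih hs
      exact ⟨u, SubAt.step hg hu, hus⟩

theorem height_node (f : F) (ts : List (RTerm F)) :
    height (RTerm.node f ts) = (ts.map (fun u => height u + 1)).foldr max 0 := by
  induction ts with
  | nil => simp [height]
  | cons a l ih => simp [height, ih]

theorem height_le_succ_iff {f : F} {ts : List (RTerm F)} {n : ℕ} :
    height (RTerm.node f ts) ≤ n + 1 ↔ ∀ u ∈ ts, height u ≤ n := by
  rw [height_node]
  constructor
  · intro h u hu
    have hmem : height u + 1 ∈ ts.map (fun u => height u + 1) :=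
      List.mem_map.2 ⟨u, hu, rfl⟩
    have := foldr_max_le hmem
    omega
  · intro h
    by_cases hts : ts = []
    · subst hts; simp
    · rcases foldr_max_mem (l := ts.map (fun u => height u + 1))
        (by simpa using hts) with h0 | hmem
      · omega
      · obtain ⟨u, hu, hequ⟩ := List.mem_map.1 hmem
        have := h u hu; omega

theorem height_child_lt {f : F} {ts : List (RTerm F)} {u : RTerm F}
    (h : u ∈ ts) : height u < height (RTerm.node f ts) := by
  rw [height_node]
  have hmem : height u + 1 ∈ ts.map (fun v => height v + 1) :=
    List.mem_map.2 ⟨u, h, rfl⟩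
  have := foldr_max_le hmem
  omega

theorem exists_max_child {f : F} {ts : List (RTerm F)} (h : ts ≠ []) :
    ∃ u ∈ ts, height (RTerm.node f ts) = height u + 1 := by
  rw [height_node]
  rcases foldr_max_mem (l := ts.map (fun u => height u + 1)) (by simpa using h) with h0 | hmem
  · exfalso
    obtain ⟨a, ha⟩ := List.exists_mem_of_ne_nil ts h
    have hmem : height a + 1 ∈ ts.map (fun v => height v + 1) :=
      List.mem_map.2 ⟨a, ha, rfl⟩
    have := foldr_max_le hmem
    omega
  · obtain ⟨u, hu, hequ⟩ := List.mem_map.1 hmem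
    exact ⟨u, hu, hequ.symm⟩

theorem height_node_eq_zero {f : F} {ts : List (RTerm F)} :
    height (RTerm.node f ts) = 0 ↔ ts = [] := by
  cases ts with
  | nil => simp [height]
  | cons a l =>
    simp only [height]
    constructor
    · intro h; omega
    · intro h; simp at h

theorem height_pos_of_ne_nil {f : F} {ts : List (RTerm F)} (h : ts ≠ []) :
    0 < height (RTerm.node f ts) := by
  rcases Nat.eq_zero_or_pos (height (RTerm.node f ts)) with h0 | h0
  · exact absurd (height_node_eq_zero.1 h0) h
  · exact h0

theorem height_sub_le {t s : RTerm F} {p : List ℕ}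
    (h : SubAt t p s) : height s ≤ height t := by
  induction h with
  | refl => exact le_refl _
  | step hg hs ih =>
    exact le_trans ih (le_of_lt (height_child_lt (List.mem_of_getElem? hg)))

theorem height_sub_lt {t s : RTerm F} {p : List ℕ}
    (h : SubAt t p s) (hp : p ≠ []) : height s < height t := by
  cases h with
  | refl => exact absurd rfl hp
  | step hg hs =>
    exact lt_of_le_of_lt (height_sub_le hs) (height_child_lt (List.mem_of_getElem? hg))

theorem map_node (g : F → G) (f : F) (ts : List (RTerm F)) :
    map g (RTerm.node f ts) = RTerm.node (g f) (ts.map (map g)) := by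
  rw [map]
  congr 1
  simp [List.attach_map_subtype_val]

theorem height_map (g : F → G) (t : RTerm F) : height (map g t) = height t := by
  induction t using indOn with
  | h f ts ih =>
    rw [map_node, height_node, height_node, List.map_map]
    congr 1
    exact List.map_congr_left (fun u hu => by simp [ih u hu])

theorem ReplAt.subAt {t t' a : RTerm F} {p : List ℕ}
    (h : ReplAt t p a t') : SubAt t' p a := by
  induction h with
  | here => exact SubAt.refl _
  | step hg hr ih =>
    exact SubAt.step (lget?_set_self _ hg) ih

theorem ReplAt.rev {t t' a b : RTerm F} {p : List ℕ}
    (hs : SubAt t p b) (h : ReplAt t p a t') : ReplAt t' p b t := by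
  induction h generalizing b with
  | here t s =>
    cases hs
    exact ReplAt.here _ _
  | @step f ts k u u' s q hg hr ih =>
    cases hs with
    | step hg' hs' =>
      have heq := Option.some.inj (hg.symm.trans hg')
      rw [← heq] at hs'
      have := ReplAt.step (f := f) (lget?_set_self u' hg) (ih hs')
      rwa [lset_set, lset_self hg] at this

theorem ReplAt.self {t t' a : RTerm F} {p : List ℕ}
    (h : ReplAt t p a t') (hs : SubAt t p a) : t' = t := by
  induction h with
  | here => cases hs; rfl
  | @step f ts k u u' s q hg hr ih =>
    cases hs with
    | step hg' hs' =>
      have heq := Option.some.inj (hg.symm.trans hg')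
      rw [← heq] at hs'
      rw [ih hs', lset_self hg]

end RTerm

section EqEAux

open RTerm

theorem Rew.symm {E : List (Pat F × Pat F)} {s t : RTerm F}
    (h : Rew E s t) : Rew E t s := by
  obtain ⟨l, r, hor, σ, p, hsub, hrep⟩ := h
  exact ⟨r, l, hor.symm.imp id id, σ, p, hrep.subAt, ReplAt.rev hsub hrep⟩

theorem EqE.rfl {E : List (Pat F × Pat F)} {t : RTerm F} : EqE E t t :=
  Relation.ReflTransGen.refl

theorem EqE.trans {E : List (Pat F × Pat F)} {s t u : RTerm F}
    (h : EqE E s t) (h' : EqE E t u) : EqE E s u :=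
  Relation.ReflTransGen.trans h h'

theorem EqE.symm {E : List (Pat F × Pat F)} {s t : RTerm F}
    (h : EqE E s t) : EqE E t s :=
  @Std.Symm.symm _ _ (@Relation.ReflTransGen.stdSymm _ _ ⟨fun _ _ hr => Rew.symm hr⟩) _ _ h

theorem Rew.lift_child {E : List (Pat F × Pat F)} {f : F} {ts : List (RTerm F)}
    {k : ℕ} {a b : RTerm F} (hk : ts[k]? = some a) (h : Rew E a b) :
    Rew E (RTerm.node f ts) (RTerm.node f (ts.set k b)) := by
  obtain ⟨l, r, hor, σ, p, hsub, hrep⟩ := h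
  exact ⟨l, r, hor, σ, k :: p, SubAt.step hk hsub, ReplAt.step hk hrep⟩

theorem EqE.lift_child {E : List (Pat F × Pat F)} {f : F} {ts : List (RTerm F)}
    {k : ℕ} {a b : RTerm F} (hk : ts[k]? = some a) (h : EqE E a b) :
    EqE E (RTerm.node f ts) (RTerm.node f (ts.set k b)) := by
  induction h with
  | refl => rw [lset_self hk]; exact EqE.rfl
  | @tail c d hc hcd ih =>
    refine Relation.ReflTransGen.tail ih ?_
    have := Rew.lift_child (f := f) (lget?_set_self c hk) hcd
    rwa [lset_set] at this

theorem EqE.congr_children {E : List (Pat F × Pat F)} (f : F)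
    {ts ts' : List (RTerm F)} (hlen : ts.length = ts'.length)
    (h : ∀ (k : ℕ) a b, ts[k]? = some a → ts'[k]? = some b → EqE E a b) :
    EqE E (RTerm.node f ts) (RTerm.node f ts') := by
  have key : ∀ m, m ≤ ts.length →
      EqE E (RTerm.node f ts) (RTerm.node f (ts'.take m ++ ts.drop m)) := by
    intro m
    induction m with
    | zero => intro _; simpa using EqE.rfl
    | succ m ih =>
      intro hm
      have hm' : m < ts.length := by omega
      have hm'' : m < ts'.length := hlen ▸ hm'
      have ha := List.getElem?_eq_getElem hm'
      have hb := List.getElem?_eq_getElem hm''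
      set a := ts.get ⟨m, hm'⟩ with hadef
      set b := ts'.get ⟨m, hm''⟩ with hbdef
      have hidx : (ts'.take m ++ ts.drop m)[m]? = some a := by
        rw [List.getElem?_append_right (by rw [List.length_take]; omega)]
        rw [List.length_take, Nat.min_eq_left (le_of_lt hm''),
          Nat.sub_self, List.getElem?_drop]
        simpa [hadef] using ha
      have step := EqE.lift_child (f := f) hidx (h m a b ha hb)
      refine (ih (le_of_lt hm')).trans ?_
      have hset : (ts'.take m ++ ts.drop m).set m b
          = ts'.take (m + 1) ++ ts.drop (m + 1) := by
        apply List.ext_getElem?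
        intro n
        rcases lt_trichotomy n m with hn | rfl | hn
        · rw [lget?_set_ne (by omega)]
          rw [List.getElem?_append_left (by rw [List.length_take]; omega),
            List.getElem?_append_left (by rw [List.length_take]; omega),
            List.getElem?_take_of_lt hn, List.getElem?_take_of_lt (by omega)]
        · rw [lget?_set_self _ hidx]
          rw [List.getElem?_append_left (by rw [List.length_take]; omega),
            List.getElem?_take_of_lt (by omega)]
          exact hb.symm
        · rw [lget?_set_ne (by omega)]
          rw [List.getElem?_append_right (by rw [List.length_take]; omega),
            List.getElem?_append_right (by rw [List.length_take]; omega),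
            List.length_take, List.length_take,
            Nat.min_eq_left (le_of_lt hm''), Nat.min_eq_left (by omega),
            List.getElem?_drop, List.getElem?_drop]
          congr 1
          omega
      rw [hset] at step
      exact step
  have := key ts.length (le_refl _)
  rw [List.drop_length, List.append_nil, hlen, List.take_length] at this
  exact this

end EqEAux

namespace Pat

theorem indOn {motive : Pat F → Prop} (hv : ∀ v, motive (Pat.var v))
    (h : ∀ f ps, (∀ p ∈ ps, motive p) → motive (Pat.node f ps)) : ∀ p, motive p
  | .var v => hv v
  | .node f ps => h f ps (fun p hp => indOn hv h p)
decreasing_by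
  simp only [Pat.node.sizeOf_spec]
  have := List.sizeOf_lt_of_mem hp
  omega

theorem subst_var (σ : ℕ → RTerm F) (v : ℕ) :
    Pat.subst σ (Pat.var v) = σ v := by
  rw [Pat.subst]

theorem subst_node (σ : ℕ → RTerm F) (f : F) (ps : List (Pat F)) :
    Pat.subst σ (Pat.node f ps) = RTerm.node f (ps.map (Pat.subst σ)) := by
  rw [Pat.subst]
  congr 1
  simp [List.attach_map_subtype_val]

theorem height_node (f : F) (ps : List (Pat F)) :
    Pat.height (Pat.node f ps) = (ps.map (fun q => Pat.height q + 1)).foldr max 0 := by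
  induction ps with
  | nil => simp [Pat.height]
  | cons a l ih => simp [Pat.height, ih]

theorem height_zero_char {q : Pat F} (h : Pat.height q = 0) :
    (∃ v, q = Pat.var v) ∨ (∃ c, q = Pat.node c []) := by
  cases q with
  | var v => exact Or.inl ⟨v, rfl⟩
  | node c l =>
    right
    refine ⟨c, ?_⟩
    cases l with
    | nil => rfl
    | cons a m => simp [Pat.height] at h

theorem eq_var_of_height_zero {v : ℕ} {q : Pat F} (h : Pat.height q = 0)
    (hv : Pat.HasVar v q) : q = Pat.var v := by
  rcases height_zero_char h with ⟨w, rfl⟩ | ⟨c, rfl⟩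
  · cases hv; rfl
  · cases hv with
    | node hmem _ => simp at hmem

theorem args_height_zero {f : F} {ps : List (Pat F)}
    (h : Pat.height (Pat.node f ps) ≤ 1) : ∀ q ∈ ps, Pat.height q = 0 := by
  intro q hq
  rw [height_node] at h
  have hmem : Pat.height q + 1 ∈ ps.map (fun q => Pat.height q + 1) :=
    List.mem_map.2 ⟨q, hq, rfl⟩
  have := foldr_max_le hmem
  omega

theorem hasVar_subst_le {v : ℕ} {P : Pat F} (h : Pat.HasVar v P) (σ : ℕ → RTerm F) :
    RTerm.height (σ v) ≤ RTerm.height (Pat.subst σ P) := by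
  induction h with
  | var => rw [subst_var]
  | @node f ps p hmem hvar ih =>
    rw [subst_node]
    have : Pat.subst σ p ∈ ps.map (Pat.subst σ) := List.mem_map.2 ⟨p, hmem, rfl⟩
    exact le_trans ih (le_of_lt (RTerm.height_child_lt this))

theorem hasVar_subst_lt {v : ℕ} {f : F} {ps : List (Pat F)}
    (h : Pat.HasVar v (Pat.node f ps)) (σ : ℕ → RTerm F) :
    RTerm.height (σ v) < RTerm.height (Pat.subst σ (Pat.node f ps)) := by
  cases h with
  | node hmem hvar =>
    rw [subst_node]
    rename_i p
    have hm : Pat.subst σ p ∈ ps.map (Pat.subst σ) := List.mem_map.2 ⟨p, hmem, rfl⟩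
    exact lt_of_le_of_lt (hasVar_subst_le hvar σ) (RTerm.height_child_lt hm)

theorem subst_height_le {σ : ℕ → RTerm F} {f : F} {ps : List (Pat F)} {n : ℕ}
    (hargs : ∀ q ∈ ps, Pat.height q = 0)
    (hv : ∀ v, Pat.HasVar v (Pat.node f ps) → RTerm.height (σ v) ≤ n) :
    RTerm.height (Pat.subst σ (Pat.node f ps)) ≤ n + 1 := by
  rw [subst_node, RTerm.height_le_succ_iff]
  intro u hu
  obtain ⟨q, hq, rfl⟩ := List.mem_map.1 hu
  rcases height_zero_char (hargs q hq) with ⟨v, rfl⟩ | ⟨c, rfl⟩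
  · rw [subst_var]
    exact hv v (Pat.HasVar.node hq Pat.HasVar.var)
  · rw [subst_node]
    simp [RTerm.height]

end Pat

section FlatHeight

theorem flat_subst_height {ar : F → ℕ} {l r : Pat F}
    (hf : IsFlatEq ar (l, r)) (σ : ℕ → RTerm F) :
    RTerm.height (Pat.subst σ l) = RTerm.height (Pat.subst σ r) := by
  obtain ⟨hwl, hwr, hhe, hh1, hvars⟩ := hf
  simp only at hhe hh1 hvars
  rcases Nat.lt_or_ge (Pat.height l) 1 with h0 | h1
  · -- height 0 on both sides
    have hl0 : Pat.height l = 0 := by omega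
    have hr0 : Pat.height r = 0 := by omega
    rcases Pat.height_zero_char hl0 with ⟨v, rfl⟩ | ⟨c, rfl⟩
    · have hrv : r = Pat.var v :=
        Pat.eq_var_of_height_zero hr0 ((hvars v).1 Pat.HasVar.var)
      subst hrv; rfl
    · rcases Pat.height_zero_char hr0 with ⟨v, rfl⟩ | ⟨d, rfl⟩
      · exact absurd ((hvars v).2 Pat.HasVar.var) (by intro h; cases h with
          | node hmem _ => simp at hmem)
      · rw [Pat.subst_node, Pat.subst_node]; simp [RTerm.height]
  · -- height 1 on both sides
    have hl1 : Pat.height l = 1 := by omega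
    have hr1 : Pat.height r = 1 := by omega
    obtain ⟨f, ps, rfl⟩ : ∃ f ps, l = Pat.node f ps := by
      cases l with
      | var v => simp [Pat.height] at hl1
      | node f ps => exact ⟨f, ps, rfl⟩
    obtain ⟨g, qs, rfl⟩ : ∃ g qs, r = Pat.node g qs := by
      cases r with
      | var v => simp [Pat.height] at hr1
      | node g qs => exact ⟨g, qs, rfl⟩
    have hpsne : ps ≠ [] := by
      intro h; subst h; simp [Pat.height] at hl1
    have hqsne : qs ≠ [] := by
      intro h; subst h; simp [Pat.height] at hr1
    have hsubl : 0 < RTerm.height (Pat.subst σ (Pat.node f ps)) := by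
      rw [Pat.subst_node]
      exact RTerm.height_pos_of_ne_nil (by simpa using hpsne)
    have hsubr : 0 < RTerm.height (Pat.subst σ (Pat.node g qs)) := by
      rw [Pat.subst_node]
      exact RTerm.height_pos_of_ne_nil (by simpa using hqsne)
    have hle1 : RTerm.height (Pat.subst σ (Pat.node f ps))
        ≤ RTerm.height (Pat.subst σ (Pat.node g qs)) := by
      have := Pat.subst_height_le (σ := σ)
        (Pat.args_height_zero (le_of_eq hl1))
        (fun v hv => Nat.le_sub_one_of_lt
          (Pat.hasVar_subst_lt ((hvars v).1 hv) σ))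
      omega
    have hle2 : RTerm.height (Pat.subst σ (Pat.node g qs))
        ≤ RTerm.height (Pat.subst σ (Pat.node f ps)) := by
      have := Pat.subst_height_le (σ := σ)
        (Pat.args_height_zero (le_of_eq hr1))
        (fun v hv => Nat.le_sub_one_of_lt
          (Pat.hasVar_subst_lt ((hvars v).2 hv) σ))
      omega
    omega

theorem height_set_eq {f : F} {ts : List (RTerm F)} {i : ℕ} {u u' : RTerm F}
    (hg : ts[i]? = some u) (hh : RTerm.height u' = RTerm.height u) :
    RTerm.height (RTerm.node f (ts.set i u')) = RTerm.height (RTerm.node f ts) := by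
  rw [RTerm.height_node, RTerm.height_node, List.map_set]
  congr 1
  have : RTerm.height u' + 1 = RTerm.height u + 1 := by omega
  rw [this]
  exact lset_self (by rw [List.getElem?_map, hg]; rfl)

theorem RTerm.ReplAt.height_eq {s t a b : RTerm F} {p : List ℕ}
    (h : RTerm.ReplAt s p a t) (hs : RTerm.SubAt s p b)
    (hab : RTerm.height a = RTerm.height b) :
    RTerm.height t = RTerm.height s := by
  induction h generalizing b with
  | here t s => cases hs; omega
  | @step f ts k u u' x q hg hr ih =>
    cases hs with
    | step hg' hs' =>
      have heq := Option.some.inj (hg.symm.trans hg')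
      rw [← heq] at hs'
      exact height_set_eq hg (ih hs' hab)

theorem Rew.height_eq {E : List (Pat F × Pat F)} {ar : F → ℕ}
    (hE : ∀ e ∈ E, IsFlatEq ar e) {s t : RTerm F} (h : Rew E s t) :
    RTerm.height t = RTerm.height s := by
  obtain ⟨l, r, hor, σ, p, hsub, hrep⟩ := h
  have hh : RTerm.height (Pat.subst σ r) = RTerm.height (Pat.subst σ l) := by
    rcases hor with h1 | h2
    · exact (flat_subst_height (hE _ h1) σ).symm
    · exact flat_subst_height (hE _ h2) σ
  exact RTerm.ReplAt.height_eq hrep hsub hh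

theorem EqE.height_eq {E : List (Pat F × Pat F)} {ar : F → ℕ}
    (hE : ∀ e ∈ E, IsFlatEq ar e) {s t : RTerm F} (h : EqE E s t) :
    RTerm.height s = RTerm.height t := by
  induction h with
  | refl => rfl
  | tail hc hcd ih => rw [ih, (Rew.height_eq hE hcd).symm]

end FlatHeight

theorem RTerm.SubAt.nil_eq {t s : RTerm F} (h : RTerm.SubAt t [] s) : s = t := by
  cases h; rfl

theorem RTerm.ReplAt.nil_eq {t t' a : RTerm F}
    (h : RTerm.ReplAt t [] a t') : t' = a := by
  cases h; rfl

theorem RTerm.SubAt.cons_inv {f : F} {ts : List (RTerm F)} {k : ℕ} {q : List ℕ}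
    {s : RTerm F} (h : RTerm.SubAt (RTerm.node f ts) (k :: q) s) :
    ∃ u, ts[k]? = some u ∧ RTerm.SubAt u q s := by
  cases h with
  | step hg hs => exact ⟨_, hg, hs⟩

theorem RTerm.ReplAt.cons_inv {f : F} {ts : List (RTerm F)} {k : ℕ} {q : List ℕ}
    {a t' : RTerm F} (h : RTerm.ReplAt (RTerm.node f ts) (k :: q) a t') :
    ∃ u u', ts[k]? = some u ∧ RTerm.ReplAt u q a u' ∧ t' = RTerm.node f (ts.set k u') := by
  cases h with
  | step hg hr => exact ⟨_, _, hg, hr, rfl⟩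

section MainL

variable {E : List (Pat F × Pat F)} {ar : F → ℕ}

/-- Child-replacement relation used in variants: either the child is kept
up to `=E` (constant case), or it is replaced according to `R` up to `=E`. -/
def Var1 (E : List (Pat F × Pat F)) (R : RTerm F → RTerm F → Prop)
    (a a' : RTerm F) : Prop :=
  (RTerm.height a = 0 ∧ EqE E a a') ∨
  ∃ b b', R b b' ∧ EqE E a b ∧ EqE E a' b'

/-- `u'` is obtained from `u` by replacing every child according to `Var1`. -/
def VariantNode (E : List (Pat F × Pat F)) (R : RTerm F → RTerm F → Prop)
    (u u' : RTerm F) : Prop :=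
  ∃ f ts ts', u = RTerm.node f ts ∧ u' = RTerm.node f ts' ∧
    ts.length = ts'.length ∧
    ∀ (k : ℕ) a a', ts[k]? = some a → ts'[k]? = some a' → Var1 E R a a'

theorem var1_iff (hE : ∀ e ∈ E, IsFlatEq ar e) {R : RTerm F → RTerm F → Prop}
    (hR1 : ∀ a a', R a a' → 0 < RTerm.height a ∧ 0 < RTerm.height a')
    (hR2 : ∀ a a' b b', R a a' → R b b' → (EqE E a b ↔ EqE E a' b'))
    {a a' b b' : RTerm F} (ha : Var1 E R a a') (hb : Var1 E R b b') :
    EqE E a b ↔ EqE E a' b' := by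
  rcases ha with ⟨ha0, hae⟩ | ⟨ar1, ar2, hra, hae1, hae2⟩
  · rcases hb with ⟨hb0, hbe⟩ | ⟨br1, br2, hrb, hbe1, hbe2⟩
    · constructor
      · intro h; exact (hae.symm.trans h).trans hbe
      · intro h; exact (hae.trans h).trans hbe.symm
    · constructor
      · intro h
        exfalso
        have h1 := EqE.height_eq hE (h.trans hbe1)
        have := (hR1 _ _ hrb).1
        omega
      · intro h
        exfalso
        have h1 := EqE.height_eq hE (h.trans hbe2)
        have h2 := EqE.height_eq hE hae
        have := (hR1 _ _ hrb).2
        omega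
  · rcases hb with ⟨hb0, hbe⟩ | ⟨br1, br2, hrb, hbe1, hbe2⟩
    · constructor
      · intro h
        exfalso
        have h1 := EqE.height_eq hE (h.symm.trans hae1)
        have := (hR1 _ _ hra).1
        omega
      · intro h
        exfalso
        have h1 := EqE.height_eq hE (h.symm.trans hae2)
        have h2 := EqE.height_eq hE hbe
        have := (hR1 _ _ hra).2
        omega
    · constructor
      · intro h
        refine hae2.trans (((hR2 _ _ _ _ hra hrb).1 (hae1.symm.trans (h.trans hbe1))).trans hbe2.symm)
      · intro h
        refine hae1.trans (((hR2 _ _ _ _ hra hrb).2 (hae2.symm.trans (h.trans hbe2))).trans hbe1.symm)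

theorem mainL (hE : ∀ e ∈ E, IsFlatEq ar e) {R : RTerm F → RTerm F → Prop}
    (hR1 : ∀ a a', R a a' → 0 < RTerm.height a ∧ 0 < RTerm.height a')
    (hR2 : ∀ a a' b b', R a a' → R b b' → (EqE E a b ↔ EqE E a' b'))
    {v v' : RTerm F} (hvv : VariantNode E R v v') :
    ∀ u, EqE E u v → 2 ≤ RTerm.height u →
      ∀ u', VariantNode E R u u' → EqE E u' v' := by
  intro u huv
  induction huv using Relation.ReflTransGen.head_induction_on with
  | refl =>
    intro hh u' huu
    obtain ⟨f, ts, ts', rfl, rfl, hlen, hvar⟩ := huu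
    obtain ⟨f2, ts2, ts2', heq, rfl, hlen2, hvar2⟩ := hvv
    cases heq
    apply EqE.congr_children _ (hlen.symm.trans hlen2)
    intro k a b hka hkb
    obtain ⟨c, hc⟩ : ∃ c, ts[k]? = some c := by
      have h1 : k < ts'.length := (List.getElem?_eq_some_iff.1 hka).1
      exact ⟨_, List.getElem?_eq_getElem (by omega)⟩
    exact (var1_iff hE hR1 hR2 (hvar k c a hc hka) (hvar2 k c b hc hkb)).1 EqE.rfl
  | head hstep hrest ih =>
    rename_i u w
    intro hh u' huu
    have hhw : RTerm.height w = RTerm.height u := Rew.height_eq hE hstep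
    obtain ⟨f, ts, ts', rfl, rfl, hlen, hvar⟩ := huu
    obtain ⟨l, rr, hor, σ, p, hsub, hrep⟩ := hstep
    have hflat : Pat.height l = Pat.height rr ∧ Pat.height l ≤ 1 ∧
        (∀ x, Pat.HasVar x l ↔ Pat.HasVar x rr) := by
      rcases hor with h1 | h2
      · obtain ⟨_, _, a, b, c⟩ := hE _ h1
        simp only at a b c
        exact ⟨a, b, c⟩
      · obtain ⟨_, _, a, b, c⟩ := hE _ h2
        simp only at a b c
        exact ⟨a.symm, by omega, fun x => (c x).symm⟩
    obtain ⟨hfh, hf1, hfv⟩ := hflat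
    cases p with
    | nil =>
      -- root rewrite step
      have hu : Pat.subst σ l = RTerm.node f ts := hsub.nil_eq
      have hw : w = Pat.subst σ rr := hrep.nil_eq
      rcases Nat.lt_or_ge (Pat.height l) 1 with h0 | h1
      · have hl0 : Pat.height l = 0 := by omega
        have hr0 : Pat.height rr = 0 := by omega
        rcases Pat.height_zero_char hl0 with ⟨x, rfl⟩ | ⟨c, rfl⟩
        · -- variable: trivial step
          have hrv : rr = Pat.var x :=
            Pat.eq_var_of_height_zero hr0 ((hfv x).1 Pat.HasVar.var)
          subst hrv
          have hwu : w = RTerm.node f ts := by rw [hw, ← hu]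
          subst hwu
          exact ih (by omega) _ ⟨f, ts, ts', rfl, rfl, hlen, hvar⟩
        · -- constant: impossible since height u ≥ 2
          exfalso
          rw [Pat.subst_node] at hu
          have : RTerm.height (RTerm.node f ts) = 0 := by
            rw [← hu]; simp [RTerm.height]
          omega
      · have hl1 : Pat.height l = 1 := by omega
        have hr1 : Pat.height rr = 1 := by omega
        obtain ⟨g, ps, rfl⟩ : ∃ g ps, l = Pat.node g ps := by
          cases l with
          | var v => simp [Pat.height] at hl1
          | node g ps => exact ⟨g, ps, rfl⟩
        obtain ⟨g', qs, rfl⟩ : ∃ g' qs, rr = Pat.node g' qs := by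
          cases rr with
          | var v => simp [Pat.height] at hr1
          | node g' qs => exact ⟨g', qs, rfl⟩
        rw [Pat.subst_node] at hu hw
        obtain ⟨rfl, rfl⟩ : f = g ∧ ts = ps.map (Pat.subst σ) := by
          cases hu; exact ⟨rfl, rfl⟩
        have hlen' : ps.length = ts'.length := by simpa using hlen
        have hts_get : ∀ (k : ℕ) qk, ps[k]? = some qk →
            (ps.map (Pat.subst σ))[k]? = some (Pat.subst σ qk) := by
          intro k qk hk
          rw [List.getElem?_map, hk]
          rfl
        classical
        set σ' : ℕ → RTerm F := fun x =>
          if h : ∃ k : ℕ, ps[k]? = some (Pat.var x) then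
            (ts'[h.choose]?).getD (σ x)
          else σ x with hσ'
        have K0 : ∀ x (h : ∃ k : ℕ, ps[k]? = some (Pat.var x)),
            ∃ (k : ℕ), ∃ a', ps[k]? = some (Pat.var x) ∧ ts'[k]? = some a' ∧ σ' x = a' := by
          intro x h
          have hk := h.choose_spec
          have hklt : h.choose < ps.length := (List.getElem?_eq_some_iff.1 hk).1
          have hklt' : h.choose < ts'.length := by omega
          have ha' := List.getElem?_eq_getElem hklt'
          refine ⟨h.choose, _, hk, ha', ?_⟩
          rw [hσ']
          simp only [dif_pos h, ha', Option.getD_some]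
        have K2 : ∀ x (k : ℕ) a', ps[k]? = some (Pat.var x) → ts'[k]? = some a' →
            EqE E a' (σ' x) := by
          intro x k a' hk ha'
          obtain ⟨k2, a2, hk2, ha2, hs2⟩ := K0 x ⟨k, hk⟩
          have h1 : (ps.map (Pat.subst σ))[k]? = some (σ x) := by
            rw [hts_get k _ hk, Pat.subst_var]
          have h2 : (ps.map (Pat.subst σ))[k2]? = some (σ x) := by
            rw [hts_get k2 _ hk2, Pat.subst_var]
          have := (var1_iff hE hR1 hR2 (hvar k _ _ h1 ha')
            (hvar k2 _ _ h2 ha2)).1 EqE.rfl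
          rwa [hs2]
        have stepA : EqE E (RTerm.node f ts') (Pat.subst σ' (Pat.node f ps)) := by
          rw [Pat.subst_node]
          apply EqE.congr_children _ (by simpa using hlen'.symm)
          intro k a' sa ha' hsa
          obtain ⟨qk, hqk, hqs⟩ : ∃ qk, ps[k]? = some qk ∧ sa = Pat.subst σ' qk := by
            rw [List.getElem?_map] at hsa
            cases hget : ps[k]? with
            | none => rw [hget] at hsa; simp at hsa
            | some qk =>
              rw [hget] at hsa
              exact ⟨qk, rfl, (Option.some.inj hsa).symm⟩
          have hqk0 : Pat.height qk = 0 :=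
            Pat.args_height_zero (le_of_eq hl1) qk (List.mem_of_getElem? hqk)
          rcases Pat.height_zero_char hqk0 with ⟨x, rfl⟩ | ⟨c, rfl⟩
          · rw [hqs, Pat.subst_var]
            exact K2 x k a' hqk ha'
          · rw [hqs, Pat.subst_node]
            have hts : (ps.map (Pat.subst σ))[k]? = some (RTerm.node c []) := by
              rw [hts_get k _ hqk, Pat.subst_node]
              rfl
            rcases hvar k _ _ hts ha' with ⟨h0, he⟩ | ⟨b, b', hr, he1, he2⟩
            · simpa using he.symm
            · exfalso
              have hb := EqE.height_eq hE he1
              have : RTerm.height (RTerm.node c ([] : List (RTerm F))) = 0 := by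
                simp [RTerm.height]
              have := (hR1 _ _ hr).1
              omega
        have stepB : Rew E (Pat.subst σ' (Pat.node f ps)) (Pat.subst σ' (Pat.node g' qs)) :=
          ⟨_, _, hor, σ', [], RTerm.SubAt.refl _, RTerm.ReplAt.here _ _⟩
        have stepC : VariantNode E R w (Pat.subst σ' (Pat.node g' qs)) := by
          refine ⟨g', qs.map (Pat.subst σ), qs.map (Pat.subst σ'), hw, by rw [Pat.subst_node],
            by simp, ?_⟩
          intro k a a' ha ha'
          obtain ⟨qk, hqk, rfl⟩ : ∃ qk, qs[k]? = some qk ∧ a = Pat.subst σ qk := by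
            rw [List.getElem?_map] at ha
            cases hget : qs[k]? with
            | none => rw [hget] at ha; simp at ha
            | some qk =>
              rw [hget] at ha
              exact ⟨qk, rfl, (Option.some.inj ha).symm⟩
          have ha'' : a' = Pat.subst σ' qk := by
            rw [List.getElem?_map, hqk] at ha'
            exact (Option.some.inj ha').symm
          subst ha''
          have hqk0 : Pat.height qk = 0 :=
            Pat.args_height_zero (le_of_eq hr1) qk (List.mem_of_getElem? hqk)
          rcases Pat.height_zero_char hqk0 with ⟨x, rfl⟩ | ⟨c, rfl⟩
          · -- variable child
            have hvr : Pat.HasVar x (Pat.node g' qs) :=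
              Pat.HasVar.node (List.mem_of_getElem? hqk) Pat.HasVar.var
            have hvl : Pat.HasVar x (Pat.node f ps) := (hfv x).2 hvr
            obtain ⟨p0, hp0mem, hp0var⟩ : ∃ p0 ∈ ps, Pat.HasVar x p0 := by
              cases hvl with
              | node hmem hv => exact ⟨_, hmem, hv⟩
            have hp0 : p0 = Pat.var x :=
              Pat.eq_var_of_height_zero
                (Pat.args_height_zero (le_of_eq hl1) p0 hp0mem) hp0var
            subst hp0
            obtain ⟨k0, hk0⟩ := List.getElem?_of_mem hp0mem
            obtain ⟨k2, a2, hk2, ha2, hs2⟩ := K0 x ⟨k0, hk0⟩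
            have h2 : (ps.map (Pat.subst σ))[k2]? = some (σ x) := by
              rw [hts_get k2 _ hk2, Pat.subst_var]
            rw [Pat.subst_var, Pat.subst_var, hs2]
            exact hvar k2 _ _ h2 ha2
          · -- constant child
            left
            rw [Pat.subst_node, Pat.subst_node]
            exact ⟨by simp [RTerm.height], EqE.rfl⟩
        have hwh : 2 ≤ RTerm.height w := by omega
        have hrest' := ih hwh _ stepC
        exact stepA.trans ((Relation.ReflTransGen.single stepB).trans hrest')
    | cons k q =>
      obtain ⟨c, hgk, hsubc⟩ := hsub.cons_inv
      obtain ⟨c0, c2, hgk', hrepc, hweq⟩ := hrep.cons_inv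
      subst hweq
      have hc0 : c = c0 := Option.some.inj (hgk.symm.trans hgk')
      subst hc0
      have hrw : Rew E c c2 := ⟨l, rr, hor, σ, q, hsubc, hrepc⟩
      have hc2c : EqE E c2 c := EqE.symm (Relation.ReflTransGen.single hrw)
      refine ih (by omega) _ ⟨f, ts.set k c2, ts', rfl, rfl, by simpa using hlen, ?_⟩
      intro n a a' hna hna'
      by_cases hnk : n = k
      · subst hnk
        have ha : a = c2 := by
          have := lget?_set_self c2 hgk
          rw [this] at hna
          exact (Option.some.inj hna).symm
        subst ha
        rcases hvar n c a' hgk hna' with ⟨h0, he⟩ | ⟨b, b', hr, he1, he2⟩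
        · left
          refine ⟨?_, hc2c.trans he⟩
          rw [Rew.height_eq hE hrw]
          exact h0
        · exact Or.inr ⟨b, b', hr, hc2c.trans he1, he2⟩
      · refine hvar n a a' ?_ hna'
        rwa [lget?_set_ne (fun h => hnk h.symm)] at hna

end MainL

section PumpAux

variable {Q : Type}

theorem Run.term_node (ρ : Rule F Q) (rs : List (Run F Q)) :
    Run.term (RTerm.node ρ rs) = RTerm.node ρ.sym (rs.map Run.term) :=
  RTerm.map_node _ _ _

theorem Run.height_term (s : Run F Q) : RTerm.height (Run.term s) = RTerm.height s :=
  RTerm.height_map _ _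

theorem Run.state_node (ρ : Rule F Q) (rs : List (Run F Q)) :
    Run.state (RTerm.node ρ rs) = ρ.res := rfl

theorem IsRun.sub {Δ : List (Rule F Q)} {E : List (Pat F × Pat F)}
    {t s : Run F Q} {p : List ℕ} (h : IsRun Δ E t) (hs : RTerm.SubAt t p s) :
    IsRun Δ E s := by
  induction hs with
  | refl => exact h
  | step hg hsub ih =>
    cases h with
    | node _ _ hkids _ _ =>
      exact ih (hkids _ (List.mem_of_getElem? hg))

theorem sub_height_prefix {t s u : RTerm F} {a b : List ℕ}
    (h : RTerm.SubAt t (a ++ b) s) (h' : RTerm.SubAt t a u) :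
    RTerm.height s ≤ RTerm.height u := by
  obtain ⟨u', hu', hs'⟩ := h.append_inv
  rw [RTerm.SubAt.det h' hu']
  exact RTerm.height_sub_le hs'

/-- Height of the subterm at a `Dom` position. -/
theorem dom_height_le {r : Run F Q} {m : ℕ} {p : List ℕ} {s : Run F Q}
    (hp : p ∈ Dom r m) (hs : RTerm.SubAt r p s) : RTerm.height s ≤ m := by
  rcases hp with (⟨s', hs', h0, he⟩ | ⟨pb, jb, sb, s', he, hsb, hs', h0, hlt, hgt⟩) |
    ⟨pb, jb, sb, s', he, hsb, hs', h0, hpos, hgt⟩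
  · rw [RTerm.SubAt.det hs hs']; omega
  · subst he; rw [RTerm.SubAt.det hs hs']; omega
  · subst he; rw [RTerm.SubAt.det hs hs']; omega

theorem dom_nonnil {r : Run F Q} {m : ℕ}
    (h : ([] : List ℕ) ∈ Hcheck r m ∪ Hring r m) : False := by
  rcases h with ⟨pb, jb, _, _, he, _⟩ | ⟨pb, jb, _, _, he, _⟩ <;> simp at he

theorem mapsDom {E : List (Pat F × Pat F)} {r : Run F Q} {i j : ℕ}
    {I : List ℕ → List ℕ} (hP : PumpInj E r i j I) {p : List ℕ}
    (hp : p ∈ Dom r i) : I p ∈ Dom r j := by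
  rcases hp with (h | h) | h
  · exact Or.inl (Or.inl (hP.mapsH h))
  · exact Or.inl (Or.inr (hP.mapsHc h))
  · exact Or.inr (hP.mapsHr h)

theorem mem_Hset {r : Run F Q} {m : ℕ} {p : List ℕ} {s : Run F Q}
    (hs : RTerm.SubAt r p s) (h0 : 0 < RTerm.height s) (he : RTerm.height s = m) :
    p ∈ Hset r m := ⟨s, hs, h0, he⟩

theorem mem_Hcheck {r : Run F Q} {m : ℕ} {p : List ℕ} {k : ℕ} {s s' : Run F Q}
    (hs : RTerm.SubAt r p s) (hs' : RTerm.SubAt r (p ++ [k]) s')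
    (h0 : 0 < RTerm.height s') (hlt : RTerm.height s' < m) (hgt : m < RTerm.height s) :
    (p ++ [k]) ∈ Hcheck r m := ⟨p, k, s, s', rfl, hs, hs', h0, hlt, hgt⟩

theorem mem_Hring {r : Run F Q} {m : ℕ} {p : List ℕ} {k : ℕ} {s s' : Run F Q}
    (hs : RTerm.SubAt r p s) (hs' : RTerm.SubAt r (p ++ [k]) s')
    (h0 : RTerm.height s' = 0) (hpos : 0 < m) (hgt : m < RTerm.height s) :
    (p ++ [k]) ∈ Hring r m := ⟨p, k, s, s', rfl, hs, hs', h0, hpos, hgt⟩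

theorem dom_child_mem {r : Run F Q} {m : ℕ} {p : List ℕ} {k : ℕ} {s s' : Run F Q}
    (hs : RTerm.SubAt r p s) (hs' : RTerm.SubAt r (p ++ [k]) s')
    (h0 : 0 < m) (hgt : m < RTerm.height s) (hle : RTerm.height s' ≤ m) :
    (p ++ [k]) ∈ Dom r m := by
  rcases Nat.eq_zero_or_pos (RTerm.height s') with hz | hpos
  · exact Or.inr (mem_Hring hs hs' hz h0 hgt)
  · rcases Nat.lt_or_ge (RTerm.height s') m with hlt | hge
    · exact Or.inl (Or.inr (mem_Hcheck hs hs' hpos hlt hgt))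
    · exact Or.inl (Or.inl (mem_Hset hs' hpos (by omega)))

/-- Positivity of image subterm heights under the pump injection. -/
theorem pump_img_pos {E : List (Pat F × Pat F)} {r : Run F Q} {i j : ℕ}
    {I : List ℕ → List ℕ} (hP : PumpInj E r i j I) (hj : 1 ≤ j) {p : List ℕ}
    {s s' : Run F Q} (hp : p ∈ Dom r i) (hs : RTerm.SubAt r p s)
    (h0 : 0 < RTerm.height s) (hs' : RTerm.SubAt r (I p) s') :
    0 < RTerm.height s' := by
  rcases hp with (h | h) | h
  · obtain ⟨z, hz, hz0, hzj⟩ := hP.mapsH h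
    rw [RTerm.SubAt.det hs' hz]; omega
  · obtain ⟨pb, jb, sb, z, he, hsb, hz, hz0, _, _⟩ := hP.mapsHc h
    rw [RTerm.SubAt.det hs' hz]; omega
  · obtain ⟨pb, jb, sb, z, he, hsb, hz, hz0, _, _⟩ := h
    subst he
    rw [RTerm.SubAt.det hs hz] at h0
    omega

theorem pump_img_height_le {E : List (Pat F × Pat F)} {r : Run F Q} {i j : ℕ}
    {I : List ℕ → List ℕ} (hP : PumpInj E r i j I) {p : List ℕ}
    {s' : Run F Q} (hp : p ∈ Dom r i) (hs' : RTerm.SubAt r (I p) s') :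
    RTerm.height s' ≤ j :=
  dom_height_le (mapsDom hP hp) hs'

/-- Distinct `Dom` positions are parallel. -/
theorem dom_parallel {r : Run F Q} {m : ℕ} {p p' : List ℕ} {x : List ℕ}
    (hp : p ∈ Dom r m) (hp' : p' ∈ Dom r m) (he : p' = p ++ x) : p = p' := by
  cases x with
  | nil => rw [he, List.append_nil]
  | cons a y =>
    exfalso
    obtain ⟨sp, hsp, hsple⟩ : ∃ sp, RTerm.SubAt r p sp ∧ RTerm.height sp ≤ m := by
      rcases hp with (⟨s', hs', h0, hem⟩ | ⟨pb, jb, sb, s', he2, hsb, hs', h0, hlt, hgt⟩) |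
        ⟨pb, jb, sb, s', he2, hsb, hs', h0, hpos, hgt⟩
      · exact ⟨s', hs', by omega⟩
      · subst he2; exact ⟨s', hs', by omega⟩
      · subst he2; exact ⟨s', hs', by omega⟩
    rcases hp' with (⟨s', hs', h0, hem⟩ | ⟨pb, jb, sb, s', he2, hsb, hs', h0, hlt, hgt⟩) |
      ⟨pb, jb, sb, s', he2, hsb, hs', h0, hpos, hgt⟩
    · rw [he] at hs'
      have := RTerm.height_sub_lt
        (RTerm.SubAt.det hsp (hs'.append_inv.choose_spec.1) ▸
          hs'.append_inv.choose_spec.2) (by simp)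
      omega
    · -- parent pb of p' extends p, but has height > m
      have hne : (a :: y) ≠ ([] : List ℕ) := by simp
      have hsplit : pb = p ++ (a :: y).dropLast := by
        have h1 : pb ++ [jb] = p ++ ((a :: y).dropLast ++ [(a :: y).getLast hne]) := by
          rw [List.dropLast_append_getLast hne, ← he, he2]
        rw [← List.append_assoc] at h1
        exact (List.append_inj h1 (by
          have := congrArg List.length h1
          simp at this ⊢
          omega)).1
      have hle : RTerm.height sb ≤ RTerm.height sp := by
        rw [hsplit] at hsb
        exact sub_height_prefix hsb hsp
      omega
    · have hne : (a :: y) ≠ ([] : List ℕ) := by simp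
      have hsplit : pb = p ++ (a :: y).dropLast := by
        have h1 : pb ++ [jb] = p ++ ((a :: y).dropLast ++ [(a :: y).getLast hne]) := by
          rw [List.dropLast_append_getLast hne, ← he, he2]
        rw [← List.append_assoc] at h1
        exact (List.append_inj h1 (by
          have := congrArg List.length h1
          simp at this ⊢
          omega)).1
      have hle : RTerm.height sb ≤ RTerm.height sp := by
        rw [hsplit] at hsb
        exact sub_height_prefix hsb hsp
      omega

/-- The pumping replacement relation. -/
def Pump (r : Run F Q) (i : ℕ) (I : List ℕ → List ℕ) :
    List ℕ → Run F Q → Run F Q → Prop :=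
  MultiRepl (Dom r i) (fun p s => RTerm.SubAt r (I p) s)

/-- Classification of children at an above-domain node. -/
theorem childClass {r : Run F Q} {i : ℕ} {I : List ℕ → List ℕ}
    (hi2 : 0 < i) {p : List ℕ} {s s' : Run F Q}
    (hsub : RTerm.SubAt r p s) (hpump : Pump r i I p s s')
    (hh : i < RTerm.height s) :
    ∃ ρ₀ ts ts', s = RTerm.node ρ₀ ts ∧ s' = RTerm.node ρ₀ ts' ∧
      ts.length = ts'.length ∧
      ∀ (k : ℕ) c c', ts[k]? = some c → ts'[k]? = some c' →
        ((p ++ [k]) ∈ Dom r i ∧ RTerm.SubAt r (I (p ++ [k])) c' ∧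
          RTerm.height c ≤ i ∧ RTerm.SubAt r (p ++ [k]) c) ∨
        (i < RTerm.height c ∧ Pump r i I (p ++ [k]) c c' ∧
          RTerm.SubAt r (p ++ [k]) c) := by
  cases hpump with
  | here hD hρ =>
    exfalso
    have := dom_height_le hD hsub
    omega
  | @node _ f ts ts' hD hlen hch =>
    refine ⟨f, ts, ts', rfl, rfl, hlen, ?_⟩
    intro k c c' hk hk'
    have hpc : Pump r i I (p ++ [k]) c c' := hch k c c' hk hk'
    have hsubc : RTerm.SubAt r (p ++ [k]) c :=
      hsub.comp (RTerm.SubAt.step hk (RTerm.SubAt.refl c))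
    by_cases hd : (p ++ [k]) ∈ Dom r i
    · left
      refine ⟨hd, ?_, dom_height_le hd hsubc, hsubc⟩
      cases hpc with
      | here _ hρ => exact hρ
      | node hD' _ _ => exact absurd hd hD'
    · right
      refine ⟨?_, hpc, hsubc⟩
      by_contra hle
      exact hd (dom_child_mem hsub hsubc hi2 hh (by omega))

/-- Characterization of the positions of a pumped subrun. -/
theorem posChar {r : Run F Q} {i : ℕ} {I : List ℕ → List ℕ} (hi2 : 0 < i) :
    ∀ (q : List ℕ) {p : List ℕ} {s s' w : Run F Q},
      RTerm.SubAt r p s → Pump r i I p s s' → i < RTerm.height s →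
      RTerm.SubAt s' q w →
      (∃ d suf, q = d ++ suf ∧ (p ++ d) ∈ Dom r i ∧
        RTerm.SubAt r (I (p ++ d) ++ suf) w) ∨
      (∃ w0, RTerm.SubAt r (p ++ q) w0 ∧ i < RTerm.height w0 ∧
        Pump r i I (p ++ q) w0 w) := by
  intro q
  induction q with
  | nil =>
    intro p s s' w hsub hpump hh hw
    right
    refine ⟨s, by simpa using hsub, hh, ?_⟩
    have : w = s' := hw.nil_eq
    subst this
    simpa using hpump
  | cons k qt ih =>
    intro p s s' w hsub hpump hh hw
    obtain ⟨ρ₀, ts, ts', rfl, rfl, hlen, hcl⟩ := childClass hi2 hsub hpump hh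
    obtain ⟨c', hgc', hswc⟩ := hw.cons_inv
    obtain ⟨c, hgc⟩ : ∃ c, ts[k]? = some c := by
      have h1 : k < ts'.length := (List.getElem?_eq_some_iff.1 hgc').1
      exact ⟨_, List.getElem?_eq_getElem (by omega)⟩
    rcases hcl k c c' hgc hgc' with ⟨hd, hIc', _, _⟩ | ⟨hic, hpc, hsubc⟩
    · left
      exact ⟨[k], qt, rfl, hd, hIc'.comp hswc⟩
    · rcases ih hsubc hpc hic hswc with ⟨d, suf, rfl, hdom, hsw⟩ | ⟨w0, hsw0, hiw0, hpw0⟩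
      · left
        refine ⟨k :: d, suf, by simp, ?_, ?_⟩
        · rwa [List.append_cons]
        · rwa [List.append_cons]
      · right
        refine ⟨w0, ?_, hiw0, ?_⟩
        · rwa [List.append_cons]
        · rwa [List.append_cons]

end PumpAux

section Master

variable {Q : Type}

theorem master {Δ : List (Rule F Q)} {E : List (Pat F × Pat F)} {ar : F → ℕ}
    {r : Run F Q} {i j : ℕ} {I : List ℕ → List ℕ}
    (hE : ∀ e ∈ E, IsFlatEq ar e)
    (hP : PumpInj E r i j I)
    (hrun : IsRun Δ E r)
    (hj : 1 ≤ j) (hij : j < i) :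
    ∀ n : ℕ,
      (∀ p s s', RTerm.SubAt r p s → Pump r i I p s s' →
          i < RTerm.height s → RTerm.height s ≤ n →
          IsRun Δ E s' ∧ Run.state s' = Run.state s ∧
          j < RTerm.height s' ∧ RTerm.height s' < RTerm.height s) ∧
      (∀ p1 p2 s1 s2 s1' s2',
          RTerm.SubAt r p1 s1 → RTerm.SubAt r p2 s2 →
          Pump r i I p1 s1 s1' → Pump r i I p2 s2 s2' →
          i < RTerm.height s1 → i < RTerm.height s2 →
          RTerm.height s1 ≤ n → RTerm.height s2 ≤ n →
          (EqE E (Run.term s1) (Run.term s2) ↔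
           EqE E (Run.term s1') (Run.term s2'))) := by
  have hi2 : 2 ≤ i := by omega
  intro n
  induction n using Nat.strong_induction_on with
  | _ n ihn =>
  have PII : ∀ p s s', RTerm.SubAt r p s → Pump r i I p s s' →
      i < RTerm.height s → RTerm.height s ≤ n →
      IsRun Δ E s' ∧ Run.state s' = Run.state s ∧
      j < RTerm.height s' ∧ RTerm.height s' < RTerm.height s := by
    intro p s s' hsub hpump hhi hhn
    obtain ⟨ρ₀, ts, ts', rfl, rfl, hlen, hcl⟩ := childClass (by omega) hsub hpump hhi
    have hrs := hrun.sub hsub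
    cases hrs with
    | node hρΔ hargs hkids hbcE hbcN =>
    have hgetc : ∀ (k : ℕ) (c' : Run F Q), ts'[k]? = some c' →
        ∃ c, ts[k]? = some c := by
      intro k c' hk'
      have h1 : k < ts'.length := (List.getElem?_eq_some_iff.1 hk').1
      exact ⟨_, List.getElem?_eq_getElem (by omega)⟩
    have hchild : ∀ (k : ℕ) c c', ts[k]? = some c → ts'[k]? = some c' →
        IsRun Δ E c' ∧ Run.state c' = Run.state c ∧
        RTerm.height c' ≤ RTerm.height (RTerm.node ρ₀ ts) - 2 := by
      intro k c c' hk hk'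
      have hclt : RTerm.height c < RTerm.height (RTerm.node ρ₀ ts) :=
        RTerm.height_child_lt (List.mem_of_getElem? hk)
      rcases hcl k c c' hk hk' with ⟨hd, hIc', hhc, hsubc⟩ | ⟨hic, hpc, hsubc⟩
      · refine ⟨hrun.sub hIc', (hP.stPres _ hd _ _ hsubc hIc').symm, ?_⟩
        have := pump_img_height_le hP hd hIc'
        omega
      · have hml := (ihn (n - 1) (by omega)).1 _ _ _ hsubc hpc hic (by omega)
        exact ⟨hml.1, hml.2.1, by omega⟩
    have hchIff : ∀ (x y : ℕ) cx cy cx' cy',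
        ts[x]? = some cx → ts[y]? = some cy →
        ts'[x]? = some cx' → ts'[y]? = some cy' →
        (EqE E (Run.term cx) (Run.term cy) ↔
         EqE E (Run.term cx') (Run.term cy')) := by
      intro x y cx cy cx' cy' hx hy hx' hy'
      have hcxlt : RTerm.height cx < RTerm.height (RTerm.node ρ₀ ts) :=
        RTerm.height_child_lt (List.mem_of_getElem? hx)
      have hcylt : RTerm.height cy < RTerm.height (RTerm.node ρ₀ ts) :=
        RTerm.height_child_lt (List.mem_of_getElem? hy)
      rcases hcl x cx cx' hx hx' with ⟨hdx, hIx, hhx, hsx⟩ | ⟨hix, hpx, hsx⟩ <;>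
        rcases hcl y cy cy' hy hy' with ⟨hdy, hIy, hhy, hsy⟩ | ⟨hiy, hpy, hsy⟩
      · exact hP.eqPres _ _ hdx hdy cx cy cx' cy' hsx hsy hIx hIy
      · -- dom × rec : both sides impossible
        refine iff_of_false ?_ ?_
        · intro h
          have h2 := EqE.height_eq hE h
          rw [Run.height_term, Run.height_term] at h2
          omega
        · intro h
          have h2 := EqE.height_eq hE h
          rw [Run.height_term, Run.height_term] at h2
          have h3 := pump_img_height_le hP hdx hIx
          have h4 := (ihn (n - 1) (by omega)).1 _ _ _ hsy hpy hiy (by omega)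
          omega
      · refine iff_of_false ?_ ?_
        · intro h
          have h2 := EqE.height_eq hE h
          rw [Run.height_term, Run.height_term] at h2
          omega
        · intro h
          have h2 := EqE.height_eq hE h
          rw [Run.height_term, Run.height_term] at h2
          have h3 := pump_img_height_le hP hdy hIy
          have h4 := (ihn (n - 1) (by omega)).1 _ _ _ hsx hpx hix (by omega)
          omega
      · exact (ihn (n - 1) (by omega)).2 _ _ cx cy cx' cy' hsx hsy hpx hpy
          hix hiy (by omega) (by omega)
    refine ⟨IsRun.node hρΔ ?_ ?_ ?_ ?_, rfl, ?_, ?_⟩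
    · -- states of the children
      rw [hargs]
      apply List.ext_getElem?
      intro k
      rw [List.getElem?_map, List.getElem?_map]
      cases hk : ts[k]? with
      | none =>
        have hk' : ts'[k]? = none := by
          rw [List.getElem?_eq_none_iff] at hk ⊢
          omega
        rw [hk']
      | some c =>
        have h1 : k < ts'.length := by
          have := (List.getElem?_eq_some_iff.1 hk).1
          omega
        have hk' := List.getElem?_eq_getElem h1
        have hst := (hchild k c _ hk hk').2.1
        rw [hk', Option.map_some, Option.map_some, hst]
    · intro rc hmem
      obtain ⟨k, hk'⟩ := List.getElem?_of_mem hmem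
      obtain ⟨c, hk⟩ := hgetc k rc hk'
      exact (hchild k c rc hk hk').1
    · intro a b ra rb hab hga hgb
      obtain ⟨ca, hca⟩ := hgetc _ ra hga
      obtain ⟨cb, hcb⟩ := hgetc _ rb hgb
      exact (hchIff _ _ ca cb ra rb hca hcb hga hgb).1 (hbcE a b ca cb hab hca hcb)
    · intro a b ra rb hab hga hgb h
      obtain ⟨ca, hca⟩ := hgetc _ ra hga
      obtain ⟨cb, hcb⟩ := hgetc _ rb hgb
      exact hbcN a b ca cb hab hca hcb ((hchIff _ _ ca cb ra rb hca hcb hga hgb).2 h)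
    · -- j < height s'
      have hne : ts ≠ [] := by
        intro h
        subst h
        rw [RTerm.height_node_eq_zero.2 rfl] at hhi
        omega
      obtain ⟨u, humem, hequ⟩ := RTerm.exists_max_child (f := ρ₀) hne
      obtain ⟨k, hk⟩ := List.getElem?_of_mem humem
      have h1 : k < ts'.length := by
        have := (List.getElem?_eq_some_iff.1 hk).1
        omega
      have hk' := List.getElem?_eq_getElem h1
      have hlt' : RTerm.height (ts'[k]) <
          RTerm.height (RTerm.node ρ₀ ts') :=
        RTerm.height_child_lt (List.mem_of_getElem? hk')
      rcases hcl k u _ hk hk' with ⟨hd, hIc', hhc, hsubc⟩ | ⟨hic, hpc, hsubc⟩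
      · have hui : RTerm.height u = i := by omega
        have hmem : (p ++ [k]) ∈ Hset r i := mem_Hset hsubc (by omega) hui
        obtain ⟨z, hz, hz0, hzj⟩ := hP.mapsH hmem
        have := RTerm.SubAt.det hIc' hz
        subst this
        omega
      · have h4 := (ihn (n - 1) (by omega)).1 _ _ _ hsubc hpc hic (by omega)
        omega
    · -- height s' < height s
      have hb : RTerm.height (RTerm.node ρ₀ ts') ≤
          (RTerm.height (RTerm.node ρ₀ ts) - 2) + 1 := by
        rw [RTerm.height_le_succ_iff]
        intro u' hu'
        obtain ⟨k, hk'⟩ := List.getElem?_of_mem hu'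
        obtain ⟨c, hk⟩ := hgetc k u' hk'
        exact (hchild k c u' hk hk').2.2
      omega
  refine ⟨PII, ?_⟩
  -- Part I : preservation of =E between pumped subruns
  set R : RTerm F → RTerm F → Prop := fun a a' =>
    (∃ (p : List ℕ) (s s' : Run F Q), p ∈ Dom r i ∧ RTerm.SubAt r p s ∧
        RTerm.SubAt r (I p) s' ∧ 0 < RTerm.height s ∧
        a = Run.term s ∧ a' = Run.term s') ∨
    (∃ (p : List ℕ) (s s' : Run F Q), RTerm.SubAt r p s ∧ Pump r i I p s s' ∧
        i < RTerm.height s ∧ RTerm.height s + 1 ≤ n ∧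
        a = Run.term s ∧ a' = Run.term s') with hRdef
  have hR1 : ∀ a a', R a a' → 0 < RTerm.height a ∧ 0 < RTerm.height a' := by
    intro a a' hr
    rcases hr with ⟨p, s, s', hd, hs, hs', hpos, rfl, rfl⟩ |
      ⟨p, s, s', hs, hpmp, hig, hn1, rfl, rfl⟩
    · rw [Run.height_term, Run.height_term]
      exact ⟨hpos, pump_img_pos hP hj hd hs hpos hs'⟩
    · rw [Run.height_term, Run.height_term]
      have h4 := (ihn (n - 1) (by omega)).1 _ _ _ hs hpmp hig (by omega)
      exact ⟨by omega, by omega⟩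
  have hR2 : ∀ a a' b b', R a a' → R b b' → (EqE E a b ↔ EqE E a' b') := by
    intro a a' b b' hra hrb
    rcases hra with ⟨pa, sa, sa', hda, hsa, hsa', hposa, rfl, rfl⟩ |
      ⟨pa, sa, sa', hsa, hpa, hia, hna, rfl, rfl⟩
    · rcases hrb with ⟨pb, sb, sb', hdb, hsb, hsb', hposb, rfl, rfl⟩ |
        ⟨pb, sb, sb', hsb, hpb, hib, hnb, rfl, rfl⟩
      · exact hP.eqPres pa pb hda hdb sa sb sa' sb' hsa hsb hsa' hsb'
      · refine iff_of_false ?_ ?_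
        · intro h
          have h2 := EqE.height_eq hE h
          rw [Run.height_term, Run.height_term] at h2
          have hle := dom_height_le hda hsa
          omega
        · intro h
          have h2 := EqE.height_eq hE h
          rw [Run.height_term, Run.height_term] at h2
          have hle := pump_img_height_le hP hda hsa'
          have h4 := (ihn (n - 1) (by omega)).1 _ _ _ hsb hpb hib (by omega)
          omega
    · rcases hrb with ⟨pb, sb, sb', hdb, hsb, hsb', hposb, rfl, rfl⟩ |
        ⟨pb, sb, sb', hsb, hpb, hib, hnb, rfl, rfl⟩
      · refine iff_of_false ?_ ?_
        · intro h
          have h2 := EqE.height_eq hE h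
          rw [Run.height_term, Run.height_term] at h2
          have hle := dom_height_le hdb hsb
          omega
        · intro h
          have h2 := EqE.height_eq hE h
          rw [Run.height_term, Run.height_term] at h2
          have hle := pump_img_height_le hP hdb hsb'
          have h4 := (ihn (n - 1) (by omega)).1 _ _ _ hsa hpa hia (by omega)
          omega
      · exact (ihn (n - 1) (by omega)).2 _ _ sa sb sa' sb' hsa hsb hpa hpb
          hia hib (by omega) (by omega)
  have hRsw1 : ∀ a a', (fun a a' => R a' a) a a' →
      0 < RTerm.height a ∧ 0 < RTerm.height a' := by
    intro a a' h
    exact ⟨(hR1 _ _ h).2, (hR1 _ _ h).1⟩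
  have hRsw2 : ∀ a a' b b', (fun a a' => R a' a) a a' →
      (fun a a' => R a' a) b b' → (EqE E a b ↔ EqE E a' b') := by
    intro a a' b b' h1 h2
    exact (hR2 _ _ _ _ h1 h2).symm
  have hvar : ∀ p (s s' : Run F Q), RTerm.SubAt r p s → Pump r i I p s s' →
      i < RTerm.height s → RTerm.height s ≤ n →
      VariantNode E R (Run.term s) (Run.term s') ∧
      VariantNode E (fun a a' => R a' a) (Run.term s') (Run.term s) := by
    intro p s s' hsub hpump hhi hhn
    obtain ⟨ρ₀, ts, ts', rfl, rfl, hlen, hcl⟩ := childClass (by omega) hsub hpump hhi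
    rw [Run.term_node, Run.term_node]
    have hchildvar : ∀ (k : ℕ) (c c' : Run F Q), ts[k]? = some c → ts'[k]? = some c' →
        Var1 E R (Run.term c) (Run.term c') ∧
        Var1 E (fun a a' => R a' a) (Run.term c') (Run.term c) := by
      intro k c c' hk hk'
      rcases hcl k c c' hk hk' with ⟨hd, hIc', hhc, hsubc⟩ | ⟨hic, hpc, hsubc⟩
      · rcases Nat.eq_zero_or_pos (RTerm.height c) with hz | hpos
        · have hmem : (p ++ [k]) ∈ Hring r i := mem_Hring hsub hsubc hz (by omega) hhi
          have hid : I (p ++ [k]) = p ++ [k] := hP.idRing _ hmem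
          rw [hid] at hIc'
          have hcc : c' = c := RTerm.SubAt.det hIc' hsubc
          subst hcc
          constructor
          · exact Or.inl ⟨by rw [Run.height_term]; exact hz, EqE.rfl⟩
          · exact Or.inl ⟨by rw [Run.height_term]; exact hz, EqE.rfl⟩
        · constructor
          · exact Or.inr ⟨Run.term c, Run.term c',
              Or.inl ⟨_, c, c', hd, hsubc, hIc', hpos, rfl, rfl⟩, EqE.rfl, EqE.rfl⟩
          · exact Or.inr ⟨Run.term c', Run.term c,
              Or.inl ⟨_, c, c', hd, hsubc, hIc', hpos, rfl, rfl⟩, EqE.rfl, EqE.rfl⟩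
      · have hcn : RTerm.height c + 1 ≤ n := by
          have := RTerm.height_child_lt (f := ρ₀) (List.mem_of_getElem? hk)
          omega
        constructor
        · exact Or.inr ⟨Run.term c, Run.term c',
            Or.inr ⟨_, c, c', hsubc, hpc, hic, hcn, rfl, rfl⟩, EqE.rfl, EqE.rfl⟩
        · exact Or.inr ⟨Run.term c', Run.term c,
            Or.inr ⟨_, c, c', hsubc, hpc, hic, hcn, rfl, rfl⟩, EqE.rfl, EqE.rfl⟩
    constructor
    · refine ⟨ρ₀.sym, ts.map Run.term, ts'.map Run.term, rfl, rfl, by simp [hlen], ?_⟩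
      intro k a a' hka hka'
      obtain ⟨c, hk, rfl⟩ : ∃ c, ts[k]? = some c ∧ a = Run.term c := by
        rw [List.getElem?_map] at hka
        cases hg : ts[k]? with
        | none => rw [hg] at hka; simp at hka
        | some c =>
          rw [hg] at hka
          exact ⟨c, rfl, (Option.some.inj hka).symm⟩
      obtain ⟨c', hk', rfl⟩ : ∃ c', ts'[k]? = some c' ∧ a' = Run.term c' := by
        rw [List.getElem?_map] at hka'
        cases hg : ts'[k]? with
        | none => rw [hg] at hka'; simp at hka'
        | some c' =>
          rw [hg] at hka'
          exact ⟨c', rfl, (Option.some.inj hka').symm⟩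
      exact (hchildvar k c c' hk hk').1
    · refine ⟨ρ₀.sym, ts'.map Run.term, ts.map Run.term, rfl, rfl, by simp [hlen], ?_⟩
      intro k a a' hka hka'
      obtain ⟨c', hk', rfl⟩ : ∃ c', ts'[k]? = some c' ∧ a = Run.term c' := by
        rw [List.getElem?_map] at hka
        cases hg : ts'[k]? with
        | none => rw [hg] at hka; simp at hka
        | some c' =>
          rw [hg] at hka
          exact ⟨c', rfl, (Option.some.inj hka).symm⟩
      obtain ⟨c, hk, rfl⟩ : ∃ c, ts[k]? = some c ∧ a' = Run.term c := by
        rw [List.getElem?_map] at hka'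
        cases hg : ts[k]? with
        | none => rw [hg] at hka'; simp at hka'
        | some c =>
          rw [hg] at hka'
          exact ⟨c, rfl, (Option.some.inj hka').symm⟩
      exact (hchildvar k c c' hk hk').2
  intro p1 p2 s1 s2 s1' s2' hs1 hs2 hp1 hp2 hi1 hi2' hn1 hn2
  constructor
  · intro h
    exact mainL hE hR1 hR2 ((hvar p2 s2 s2' hs2 hp2 hi2' hn2).1) (Run.term s1) h
      (by rw [Run.height_term]; omega) (Run.term s1')
      ((hvar p1 s1 s1' hs1 hp1 hi1 hn1).1)
  · intro h
    have hgt1 := (PII p1 s1 s1' hs1 hp1 hi1 hn1).2.2.1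
    exact mainL hE hRsw1 hRsw2 ((hvar p2 s2 s2' hs2 hp2 hi2' hn2).2) (Run.term s1') h
      (by rw [Run.height_term]; omega) (Run.term s1)
      ((hvar p1 s1 s1' hs1 hp1 hi1 hn1).2)

end Master

section Final

variable {Q : Type}

theorem satGC_transfer {E : List (Pat F × Pat F)} {c : GC Q}
    (hconj : c.IsConjAtoms) (hatoms : c.AtomsAre GAtom.IsEqNeq)
    {r r' : Run F Q}
    (heq : ∀ q q', satAtom E Rule.res Rule.sym r (GAtom.eq q q') →
      satAtom E Rule.res Rule.sym r' (GAtom.eq q q'))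
    (hneq : ∀ q q', satAtom E Rule.res Rule.sym r (GAtom.neq q q') →
      satAtom E Rule.res Rule.sym r' (GAtom.neq q q'))
    (h : satGC E Rule.res Rule.sym r c) : satGC E Rule.res Rule.sym r' c := by
  induction c with
  | tt => trivial
  | ff => exact h
  | atom a =>
    cases a with
    | eq q q' => exact heq q q' h
    | neq q q' => exact hneq q q' h
    | cnt l a => exact hatoms.elim
    | cls l a => exact hatoms.elim
  | and c d ihc ihd => exact ⟨ihc hconj.1 hatoms.1 h.1, ihd hconj.2 hatoms.2 h.2⟩
  | or c d _ _ => exact hconj.elim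
  | not c _ => exact hconj.elim

/-- Height of a subterm below the image of a `Dom` position. -/
theorem left_height_le {E : List (Pat F × Pat F)} {r : Run F Q} {i j : ℕ}
    {I : List ℕ → List ℕ} (hP : PumpInj E r i j I) {d suf : List ℕ}
    {w : Run F Q} (hd : d ∈ Dom r i) (hw : RTerm.SubAt r (I d ++ suf) w) :
    RTerm.height w ≤ j := by
  obtain ⟨z, hz, hzs⟩ := hw.append_inv
  have h1 := dom_height_le (mapsDom hP hd) hz
  have h2 := RTerm.height_sub_le hzs
  omega

end Final


end Aux
end TreeAut

namespace TreeAut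

/-- The result of a global pumping on a run of a positive
conjunctive TABG is again a run of the automaton (it satisfies the brother and
global constraints), of strictly smaller height. -/
theorem global_pumping_is_run {F Q : Type} (A : TABG F Q)
    (hwf : A.WF) (hconj : A.gc.IsConjAtoms) (hatoms : A.gc.AtomsAre GAtom.IsEqNeq)
    (r : Run F Q) (hrun : IsRun A.rules A.eqs r)
    (hsat : satGC A.eqs Rule.res Rule.sym r A.gc)
    (i j : ℕ) (hj : 1 ≤ j) (hij : j < i) (hi : i ≤ RTerm.height r)
    (I : List ℕ → List ℕ) (r' : Run F Q)
    (hpump : IsGlobalPumpingWith A.eqs r i j I r') :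
    (IsRun A.rules A.eqs r' ∧ satGC A.eqs Rule.res Rule.sym r' A.gc) ∧
    RTerm.height r' < RTerm.height r := by

  obtain ⟨hPI, hM⟩ := hpump
  have hE := hwf.1
  have hi2 : 2 ≤ i := by omega
  by_cases hroot : ([] : List ℕ) ∈ Dom r i
  · -- the whole run is replaced by a subrun
    have hρ : RTerm.SubAt r (I []) r' := by
      cases hM with
      | here _ h => exact h
      | node hD _ _ => exact absurd hroot hD
    have hset : ([] : List ℕ) ∈ Hset r i := by
      rcases hroot with (h | h) | h
      · exact h
      · exact absurd (Or.inl h) dom_nonnil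
      · exact absurd (Or.inr h) dom_nonnil
    have hhi : RTerm.height r = i := by
      obtain ⟨s0, hs0, hpos0, hhei⟩ := hset
      have : s0 = r := hs0.nil_eq
      subst this
      exact hhei
    have hhj : RTerm.height r' = j := by
      obtain ⟨z, hz, hz0, hzj⟩ := hPI.mapsH hset
      rw [RTerm.SubAt.det hρ hz]
      exact hzj
    refine ⟨⟨hrun.sub hρ, ?_⟩, by omega⟩
    refine satGC_transfer hconj hatoms ?_ ?_ hsat
    · intro q q' hA p1 p2 w1 w2 hne h1 h2 hq1 hq2
      exact hA (I [] ++ p1) (I [] ++ p2) w1 w2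
        (fun hcontra => hne (List.append_cancel_left hcontra))
        (hρ.comp h1) (hρ.comp h2) hq1 hq2
    · intro q q' hA p1 p2 w1 w2 hne h1 h2 hq1 hq2
      exact hA (I [] ++ p1) (I [] ++ p2) w1 w2
        (fun hcontra => hne (List.append_cancel_left hcontra))
        (hρ.comp h1) (hρ.comp h2) hq1 hq2
  · -- genuine pumping below the root
    have hPmp : Pump r i I [] r r' := hM
    have hhr : i < RTerm.height r := by
      rcases Nat.lt_or_ge i (RTerm.height r) with h | h
      · exact h
      · exact absurd (Or.inl (Or.inl (mem_Hset (RTerm.SubAt.refl r) (by omega)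
          (by omega)))) hroot
    have hmst := master hE hPI hrun hj hij (RTerm.height r)
    have hmain := hmst.1 [] r r' (RTerm.SubAt.refl r) hPmp hhr (le_refl _)
    refine ⟨⟨hmain.1, ?_⟩, hmain.2.2.2⟩
    refine satGC_transfer hconj hatoms ?_ ?_ hsat
    · -- equality atoms
      intro q q' hA p1 p2 w1 w2 hne h1 h2 hq1 hq2
      have hc1 := posChar (r := r) (I := I) (by omega) p1 (RTerm.SubAt.refl r) hPmp hhr h1
      have hc2 := posChar (r := r) (I := I) (by omega) p2 (RTerm.SubAt.refl r) hPmp hhr h2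
      simp only [List.nil_append] at hc1 hc2
      rcases hc1 with ⟨d1, suf1, rfl, hdom1, hsw1⟩ | ⟨w10, hsw10, hi10, hpw10⟩
      · rcases hc2 with ⟨d2, suf2, rfl, hdom2, hsw2⟩ | ⟨w20, hsw20, hi20, hpw20⟩
        · by_cases hpi : I d1 ++ suf1 = I d2 ++ suf2
          · rw [hpi] at hsw1
            rw [RTerm.SubAt.det hsw1 hsw2]
            exact EqE.rfl
          · exact hA _ _ w1 w2 hpi hsw1 hsw2 hq1 hq2
        · exfalso
          have hw2 := hmst.1 _ _ _ hsw20 hpw20 hi20 (RTerm.height_sub_le hsw20)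
          have hhw1 : RTerm.height w1 ≤ j := left_height_le hPI hdom1 hsw1
          by_cases hpp : I d1 ++ suf1 = p2
          · rw [hpp] at hsw1
            have := RTerm.SubAt.det hsw1 hsw20
            subst this
            omega
          · have hst2 : Rule.res (RTerm.rootLabel w20) = q' := by
              rw [← hq2]
              exact hw2.2.1.symm
            have heqq := hA _ _ w1 w20 hpp hsw1 hsw20 hq1 hst2
            have := EqE.height_eq hE heqq
            rw [RTerm.height_map, RTerm.height_map] at this
            omega
      · rcases hc2 with ⟨d2, suf2, rfl, hdom2, hsw2⟩ | ⟨w20, hsw20, hi20, hpw20⟩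
        · exfalso
          have hw1 := hmst.1 _ _ _ hsw10 hpw10 hi10 (RTerm.height_sub_le hsw10)
          have hhw2 : RTerm.height w2 ≤ j := left_height_le hPI hdom2 hsw2
          by_cases hpp : p1 = I d2 ++ suf2
          · rw [← hpp] at hsw2
            have := RTerm.SubAt.det hsw10 hsw2
            subst this
            omega
          · have hst1 : Rule.res (RTerm.rootLabel w10) = q := by
              rw [← hq1]
              exact hw1.2.1.symm
            have heqq := hA _ _ w10 w2 hpp hsw10 hsw2 hst1 hq2
            have := EqE.height_eq hE heqq
            rw [RTerm.height_map, RTerm.height_map] at this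
            omega
        · -- both pumped
          have hw1 := hmst.1 _ _ _ hsw10 hpw10 hi10 (RTerm.height_sub_le hsw10)
          have hw2 := hmst.1 _ _ _ hsw20 hpw20 hi20 (RTerm.height_sub_le hsw20)
          have hst1 : Rule.res (RTerm.rootLabel w10) = q := by
            rw [← hq1]
            exact hw1.2.1.symm
          have hst2 : Rule.res (RTerm.rootLabel w20) = q' := by
            rw [← hq2]
            exact hw2.2.1.symm
          have horig := hA p1 p2 w10 w20 hne hsw10 hsw20 hst1 hst2
          exact (hmst.2 p1 p2 w10 w20 w1 w2 hsw10 hsw20 hpw10 hpw20 hi10 hi20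
            (RTerm.height_sub_le hsw10) (RTerm.height_sub_le hsw20)).1 horig
    · -- disequality atoms
      intro q q' hA p1 p2 w1 w2 hne h1 h2 hq1 hq2
      have hc1 := posChar (r := r) (I := I) (by omega) p1 (RTerm.SubAt.refl r) hPmp hhr h1
      have hc2 := posChar (r := r) (I := I) (by omega) p2 (RTerm.SubAt.refl r) hPmp hhr h2
      simp only [List.nil_append] at hc1 hc2
      rcases hc1 with ⟨d1, suf1, rfl, hdom1, hsw1⟩ | ⟨w10, hsw10, hi10, hpw10⟩
      · rcases hc2 with ⟨d2, suf2, rfl, hdom2, hsw2⟩ | ⟨w20, hsw20, hi20, hpw20⟩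
        · by_cases hpi : I d1 ++ suf1 = I d2 ++ suf2
          · exfalso
            have h1p : I d1 <+: (I d1 ++ suf1) := ⟨suf1, rfl⟩
            have h2p : I d2 <+: (I d1 ++ suf1) := ⟨suf2, hpi.symm⟩
            have hII : I d1 = I d2 := by
              rcases List.prefix_or_prefix_of_prefix h1p h2p with ⟨x, hx⟩ | ⟨x, hx⟩
              · exact dom_parallel (mapsDom hPI hdom1) (mapsDom hPI hdom2) hx.symm
              · exact (dom_parallel (mapsDom hPI hdom2) (mapsDom hPI hdom1) hx.symm).symm
            have hd12 : d1 = d2 := hPI.inj hdom1 hdom2 hII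
            subst hd12
            rw [hII] at hpi
            have := List.append_cancel_left hpi
            exact hne (by rw [this])
          · exact hA _ _ w1 w2 hpi hsw1 hsw2 hq1 hq2
        · intro hcontra
          have hw2 := hmst.1 _ _ _ hsw20 hpw20 hi20 (RTerm.height_sub_le hsw20)
          have hhw1 : RTerm.height w1 ≤ j := left_height_le hPI hdom1 hsw1
          have := EqE.height_eq hE hcontra
          rw [RTerm.height_map, RTerm.height_map] at this
          omega
      · rcases hc2 with ⟨d2, suf2, rfl, hdom2, hsw2⟩ | ⟨w20, hsw20, hi20, hpw20⟩
        · intro hcontra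
          have hw1 := hmst.1 _ _ _ hsw10 hpw10 hi10 (RTerm.height_sub_le hsw10)
          have hhw2 : RTerm.height w2 ≤ j := left_height_le hPI hdom2 hsw2
          have := EqE.height_eq hE hcontra
          rw [RTerm.height_map, RTerm.height_map] at this
          omega
        · intro hcontra
          have hw1 := hmst.1 _ _ _ hsw10 hpw10 hi10 (RTerm.height_sub_le hsw10)
          have hw2 := hmst.1 _ _ _ hsw20 hpw20 hi20 (RTerm.height_sub_le hsw20)
          have hst1 : Rule.res (RTerm.rootLabel w10) = q := by
            rw [← hq1]
            exact hw1.2.1.symm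
          have hst2 : Rule.res (RTerm.rootLabel w20) = q' := by
            rw [← hq2]
            exact hw2.2.1.symm
          have horig := (hmst.2 p1 p2 w10 w20 w1 w2 hsw10 hsw20 hpw10 hpw20 hi10 hi20
            (RTerm.height_sub_le hsw10) (RTerm.height_sub_le hsw20)).2 hcontra
          exact hA p1 p2 w10 w20 hne hsw10 hsw20 hst1 hst2 horig

end TreeAut
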